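/- Local error growth bound for asynchronous local updates: Assume ητ ≤ 1/2. For any given δ ∈ (0,1), with probability at least 1-δ, simultaneously for all agents k ∈ {1,…,K} and all 0 ≤ u < T, ‖Δ_u^k‖_∞ ≤ ‖Δ_{ι(u)}^k‖_∞ + (2γ/(1-γ)) · sqrt(η · log(|S||A|TK/δ)), where Δ_v^k = Q* − Q_v^k and ι(u) = τ⌊u/τ⌋ is the most recent synchronization step until u. -/

import Mathlib

open MeasureTheory ProbabilityTheory
open scoped ENNReal

/-- Maximum of a real-valued function over a finite (action) type. -/
noncomputable def vmax {A : Type*} [Fintype A] (f : A → ℝ) : ℝ := ⨆ a, f a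

/-- Sup norm of a real-valued function over a finite index type. -/
noncomputable def supNorm {ι : Type*} (f : ι → ℝ) : ℝ := ⨆ i, |f i|

set_option linter.unusedSectionVars false
set_option linter.unusedVariables false
set_option maxHeartbeats 2000000

namespace FedAux

section SupHelpers

variable {ι : Type*} [Fintype ι] [Nonempty ι]

lemma abs_le_supNorm (f : ι → ℝ) (i : ι) : |f i| ≤ supNorm f := by
  show |f i| ≤ ⨆ j : ι, |f j|
  exact le_ciSup (f := fun j : ι => |f j|) (Set.Finite.bddAbove (Set.finite_range _)) i

lemma supNorm_le {f : ι → ℝ} {c : ℝ} (h : ∀ i, |f i| ≤ c) : supNorm f ≤ c := by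
  show (⨆ j : ι, |f j|) ≤ c
  exact ciSup_le h

lemma supNorm_nonneg (f : ι → ℝ) : 0 ≤ supNorm f :=
  le_trans (abs_nonneg _) (abs_le_supNorm f (Classical.arbitrary ι))

lemma le_vmax {A : Type*} [Fintype A] [Nonempty A] (f : A → ℝ) (a : A) : f a ≤ vmax f := by
  show f a ≤ ⨆ a' : A, f a'
  exact le_ciSup (f := f) (Set.Finite.bddAbove (Set.finite_range _)) a

lemma vmax_le {A : Type*} [Fintype A] [Nonempty A] {f : A → ℝ} {c : ℝ}
    (h : ∀ a, f a ≤ c) : vmax f ≤ c := by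
  show (⨆ a : A, f a) ≤ c
  exact ciSup_le h

lemma abs_vmax_sub_vmax_le {A : Type*} [Fintype A] [Nonempty A] (f g : A → ℝ) {c : ℝ}
    (h : ∀ a, |f a - g a| ≤ c) : |vmax f - vmax g| ≤ c := by
  rw [abs_le]
  constructor
  · have h1 : ∀ a, g a ≤ vmax f + c := fun a => by
      have h2 := (abs_le.mp (h a)).1
      have h3 := le_vmax f a
      linarith
    have := vmax_le h1
    linarith
  · have h1 : ∀ a, f a ≤ vmax g + c := fun a => by
      have h2 := (abs_le.mp (h a)).2
      have h3 := le_vmax g a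
      linarith
    have := vmax_le h1
    linarith

end SupHelpers


/-- Hoeffding's lemma, log form. -/
lemma hoeff_log_le (p R : ℝ) (hp0 : 0 ≤ p) (hp1 : p ≤ 1) (hR : 0 ≤ R) :
    Real.log (1 - p + p * Real.exp R) ≤ p * R + R ^ 2 / 8 := by
  set D : ℝ → ℝ := fun x => 1 - p + p * Real.exp x with hDdef
  have hDpos : ∀ x, 0 < D x := by
    intro x
    simp only [hDdef]
    rcases eq_or_lt_of_le hp0 with h | h
    · simp [← h]
    · nlinarith [Real.exp_pos x]
  have hD' : ∀ x, HasDerivAt D (p * Real.exp x) x := fun x =>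
    ((Real.hasDerivAt_exp x).const_mul p).const_add (1 - p)
  set h : ℝ → ℝ := fun x => p * Real.exp x / D x - p - x / 4 with hhdef
  have hh' : ∀ x, HasDerivAt h
      ((p * Real.exp x * D x - p * Real.exp x * (p * Real.exp x)) / (D x) ^ 2 - 1 / 4) x := by
    intro x
    have h1 : HasDerivAt (fun x => p * Real.exp x) (p * Real.exp x) x :=
      (Real.hasDerivAt_exp x).const_mul p
    have h2 := h1.div (hD' x) (ne_of_gt (hDpos x))
    have h3 := (h2.sub_const p).sub ((hasDerivAt_id x).div_const 4)
    exact h3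
  have hanti : Antitone h := by
    apply antitone_of_deriv_nonpos
    · intro x; exact (hh' x).differentiableAt
    · intro x
      rw [(hh' x).deriv]
      have hd2 : (0:ℝ) < (D x) ^ 2 := pow_pos (hDpos x) 2
      rw [sub_nonpos, div_le_iff₀ hd2]
      obtain ⟨dx, hdx⟩ : ∃ d, d = D x := ⟨_, rfl⟩
      obtain ⟨ex, hex⟩ : ∃ e, e = p * Real.exp x := ⟨_, rfl⟩
      rw [← hdx, ← hex]
      nlinarith [sq_nonneg (dx - 2 * ex)]
  have hh0 : h 0 = 0 := by
    simp [hhdef, hDdef, Real.exp_zero]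
  set g : ℝ → ℝ := fun x => Real.log (D x) - p * x - x ^ 2 / 8 with hgdef
  have hg' : ∀ x, HasDerivAt g (h x) x := by
    intro x
    have h1 := (hD' x).log (ne_of_gt (hDpos x))
    have h2 := (h1.sub ((hasDerivAt_id x).const_mul p)).sub
      ((hasDerivAt_pow 2 x).div_const 8)
    refine HasDerivAt.congr_deriv h2 ?_
    simp [hhdef]
    ring
  have hganti : AntitoneOn g (Set.Ici (0 : ℝ)) := by
    apply antitoneOn_of_deriv_nonpos (convex_Ici 0)
    · exact fun x _ => (hg' x).continuousAt.continuousWithinAt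
    · intro x _; exact (hg' x).differentiableAt.differentiableWithinAt
    · intro x hx
      rw [(hg' x).deriv]
      have : h x ≤ h 0 := hanti (le_of_lt (by simpa using hx))
      linarith [hh0 ▸ this]
  have hfin : g R ≤ g 0 := hganti (Set.self_mem_Ici) hR hR
  have hg0 : g 0 = 0 := by simp [hgdef, hDdef]
  rw [hg0] at hfin
  have : Real.log (D R) - p * R - R ^ 2 / 8 ≤ 0 := hfin
  simp only [hDdef] at this
  linarith

/-- Hoeffding's lemma for a finite distribution. -/
lemma sum_mul_exp_le {ι : Type*} [Fintype ι] (q f : ι → ℝ) (a b : ℝ)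
    (hq0 : ∀ i, 0 ≤ q i) (hq1 : ∑ i, q i = 1) (hf : ∀ i, f i ∈ Set.Icc a b)
    (hmean : ∑ i, q i * f i = 0) :
    ∑ i, q i * Real.exp (f i) ≤ Real.exp ((b - a) ^ 2 / 8) := by
  have hne : Nonempty ι := by
    by_contra hn
    rw [not_nonempty_iff] at hn
    simp [Finset.univ_eq_empty] at hq1
  obtain ⟨i0⟩ := hne
  have hab : a ≤ b := le_trans (hf i0).1 (hf i0).2
  have ha : a ≤ 0 := by
    by_contra hcon
    push_neg at hcon
    have h2 : (0:ℝ) < ∑ i, q i * f i := by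
      calc (0:ℝ) < ∑ i, q i * a := by
            rw [← Finset.sum_mul, hq1, one_mul]; exact hcon
        _ ≤ ∑ i, q i * f i :=
            Finset.sum_le_sum fun i _ => mul_le_mul_of_nonneg_left (hf i).1 (hq0 i)
    rw [hmean] at h2; exact lt_irrefl _ h2
  have hb : 0 ≤ b := by
    by_contra hcon
    push_neg at hcon
    have h2 : ∑ i, q i * f i < 0 := by
      calc ∑ i, q i * f i ≤ ∑ i, q i * b :=
            Finset.sum_le_sum fun i _ => mul_le_mul_of_nonneg_left (hf i).2 (hq0 i)
        _ < 0 := by rw [← Finset.sum_mul, hq1, one_mul]; exact hcon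
    rw [hmean] at h2; exact lt_irrefl _ h2
  rcases eq_or_lt_of_le hab with heq | hlt
  · -- a = b forces a = b = 0 and f ≡ 0
    have ha0 : a = 0 := le_antisymm ha (heq ▸ hb)
    have hb0 : b = 0 := by rw [← heq, ha0]
    have hf0 : ∀ i, f i = 0 := fun i =>
      le_antisymm (hb0 ▸ (hf i).2) (ha0 ▸ (hf i).1)
    simp only [hf0, Real.exp_zero, mul_one, hq1]
    rw [ha0, hb0]
    norm_num
  · have hR : (0:ℝ) < b - a := sub_pos.mpr hlt
    -- convexity bound
    have hconv : ∀ i, Real.exp (f i)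
        ≤ ((b - f i) * Real.exp a + (f i - a) * Real.exp b) / (b - a) := by
      intro i
      have ht : 0 ≤ (b - f i) / (b - a) := div_nonneg (by linarith [(hf i).2]) hR.le
      have hs : 0 ≤ (f i - a) / (b - a) := div_nonneg (by linarith [(hf i).1]) hR.le
      have hts : (b - f i) / (b - a) + (f i - a) / (b - a) = 1 := by
        field_simp
        ring
      have := convexOn_exp.2 (Set.mem_univ a) (Set.mem_univ b) ht hs hts
      simp only [smul_eq_mul] at this
      have harg : (b - f i) / (b - a) * a + (f i - a) / (b - a) * b = f i := by
        field_simp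
        ring
      rw [harg] at this
      calc Real.exp (f i) ≤ (b - f i)/(b-a) * Real.exp a + (f i - a)/(b-a) * Real.exp b := this
        _ = ((b - f i) * Real.exp a + (f i - a) * Real.exp b) / (b - a) := by ring
    have hsum : ∑ i, q i * Real.exp (f i)
        ≤ (b * Real.exp a - a * Real.exp b) / (b - a) := by
      calc ∑ i, q i * Real.exp (f i)
          ≤ ∑ i, q i * (((b - f i) * Real.exp a + (f i - a) * Real.exp b) / (b - a)) :=
            Finset.sum_le_sum fun i _ => mul_le_mul_of_nonneg_left (hconv i) (hq0 i)
        _ = (b * Real.exp a - a * Real.exp b) / (b - a) := by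
            have expand : ∀ i, q i * (((b - f i) * Real.exp a + (f i - a) * Real.exp b) / (b - a))
                = (q i * (b * Real.exp a - a * Real.exp b)
                   + (q i * f i) * (Real.exp b - Real.exp a)) / (b - a) := by
              intro i; ring
            simp only [expand]
            rw [← Finset.sum_div]
            congr 1
            rw [Finset.sum_add_distrib, ← Finset.sum_mul, ← Finset.sum_mul, hq1, hmean]
            ring
    -- now the scalar bound
    set p : ℝ := -a / (b - a) with hpdef
    have hp0 : 0 ≤ p := div_nonneg (by linarith) hR.le
    have hp1 : p ≤ 1 := by
      rw [hpdef, div_le_one hR]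
      linarith
    have key := hoeff_log_le p (b - a) hp0 hp1 hR.le
    have hposD : (0:ℝ) < 1 - p + p * Real.exp (b - a) := by
      rcases eq_or_lt_of_le hp0 with h | h
      · simp [← h]
      · nlinarith [Real.exp_pos (b - a), hp1]
    have hident : (b * Real.exp a - a * Real.exp b) / (b - a)
        = Real.exp a * (1 - p + p * Real.exp (b - a)) := by
      rw [hpdef]
      have : Real.exp b = Real.exp a * Real.exp (b - a) := by
        rw [← Real.exp_add]; ring_nf
      rw [this]
      field_simp
      ring
    rw [hident] at hsum
    refine hsum.trans ?_
    have hlog : Real.exp a * (1 - p + p * Real.exp (b - a))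
        = Real.exp (a + Real.log (1 - p + p * Real.exp (b - a))) := by
      rw [Real.exp_add, Real.exp_log hposD]
    rw [hlog]
    apply Real.exp_le_exp.mpr
    have hpa : p * (b - a) = -a := by
      rw [hpdef]; field_simp
    nlinarith [key]


variable {β : Type*} [Fintype β] [DecidableEq β] [Nonempty β]
  [MeasurableSpace β] [MeasurableSingletonClass β]
  {Ω : Type*} [MeasurableSpace Ω] (Pr : Measure Ω) [IsProbabilityMeasure Pr]
  (X : ℕ → Ω → β) (κ1 : β → β → ℝ) (p0 : β → ℝ)



/-- Extend a finite path to all of `ℕ` by clamping the index. -/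
def pathExt (n : ℕ) (y : Fin (n + 1) → β) : ℕ → β := fun i => y ⟨min i n, by omega⟩

lemma pathExt_le (n : ℕ) (y : Fin (n + 1) → β) (i : ℕ) (h : i ≤ n) :
    pathExt n y i = y ⟨i, by omega⟩ := by
  simp [pathExt, Nat.min_eq_left h]

lemma pathExt_snoc (n : ℕ) (z : Fin (n + 1) → β) (b : β) (i : ℕ) (h : i ≤ n) :
    pathExt (n + 1) (Fin.snoc z b) i = pathExt n z i := by
  rw [pathExt_le _ _ _ (by omega), pathExt_le _ _ _ h]
  have : (⟨i, by omega⟩ : Fin (n + 2)) = Fin.castSucc ⟨i, by omega⟩ := rfl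
  rw [this, Fin.snoc_castSucc]

lemma pathExt_snoc_top (n : ℕ) (z : Fin (n + 1) → β) (b : β) (i : ℕ) (h : n + 1 ≤ i) :
    pathExt (n + 1) (Fin.snoc z b) i = b := by
  have h1 : pathExt (n + 1) (Fin.snoc z b) i
      = (Fin.snoc z b : Fin (n + 2) → β) (⟨n + 1, by omega⟩ : Fin (n + 2)) := by
    simp [pathExt, Nat.min_eq_right h]
  rw [h1]
  have h2 : (⟨n + 1, by omega⟩ : Fin (n + 2)) = Fin.last (n + 1) := rfl
  rw [h2, Fin.snoc_last]

/-- Sum over tuples, peeling off the last coordinate. -/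
lemma sum_pi_snoc {M : Type*} [AddCommMonoid M] (n : ℕ) (F : (Fin (n + 2) → β) → M) :
    ∑ y : Fin (n + 2) → β, F y = ∑ z : Fin (n + 1) → β, ∑ b : β, F (Fin.snoc z b) := by
  have he := Fintype.sum_equiv (Fin.snocEquiv (fun _ : Fin (n+2) => β))
    (fun p : β × (Fin (n+1) → β) => F (Fin.snoc p.2 p.1)) F (fun p => rfl)
  rw [← he, Fintype.sum_prod_type]
  exact Finset.sum_comm


/-- Weight of a path. -/
def pathW (n : ℕ) (x : ℕ → β) : ℝ :=
  p0 (x 0) * ∏ i ∈ Finset.range n, κ1 (x i) (x (i + 1))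

lemma pathW_nonneg (hκ0 : ∀ y b, 0 ≤ κ1 y b) (hp00 : ∀ s, 0 ≤ p0 s) (n : ℕ) (x : ℕ → β) :
    0 ≤ pathW κ1 p0 n x :=
  mul_nonneg (hp00 _) (Finset.prod_nonneg fun _ _ => hκ0 _ _)

lemma pathW_snoc (n : ℕ) (z : Fin (n + 1) → β) (b : β) :
    pathW κ1 p0 (n + 1) (pathExt (n + 1) (Fin.snoc z b))
      = pathW κ1 p0 n (pathExt n z) * κ1 (pathExt n z n) b := by
  unfold pathW
  rw [Finset.prod_range_succ]
  rw [pathExt_snoc _ _ _ _ (by omega), pathExt_snoc _ _ _ _ (by omega),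
    pathExt_snoc_top _ _ _ _ (by omega)]
  rw [show (∏ i ∈ Finset.range n, κ1 (pathExt (n+1) (Fin.snoc z b) i)
        (pathExt (n+1) (Fin.snoc z b) (i+1)))
      = ∏ i ∈ Finset.range n, κ1 (pathExt n z i) (pathExt n z (i+1)) from
    Finset.prod_congr rfl fun i hi => by
      rw [Finset.mem_range] at hi
      rw [pathExt_snoc _ _ _ _ (by omega), pathExt_snoc _ _ _ _ (by omega)]]
  ring

lemma sum_pathW (hκs : ∀ y, ∑ b, κ1 y b = 1) (hp0s : ∑ s, p0 s = 1) (n : ℕ) :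
    ∑ y : Fin (n + 1) → β, pathW κ1 p0 n (pathExt n y) = 1 := by
  induction n with
  | zero =>
      rw [Fintype.sum_equiv (Equiv.funUnique (Fin 1) β) _ p0 (fun y => by
        simp [pathW, pathExt, Equiv.funUnique])]
      exact hp0s
  | succ n ih =>
      rw [sum_pi_snoc]
      calc ∑ z : Fin (n+1) → β, ∑ b : β,
            pathW κ1 p0 (n+1) (pathExt (n+1) (Fin.snoc z b))
          = ∑ z : Fin (n+1) → β, pathW κ1 p0 n (pathExt n z) := by
            apply Finset.sum_congr rfl
            intro z _
            rw [show ∑ b : β, pathW κ1 p0 (n+1) (pathExt (n+1) (Fin.snoc z b))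
                = ∑ b : β, pathW κ1 p0 n (pathExt n z) * κ1 (pathExt n z n) b from
              Finset.sum_congr rfl fun b _ => pathW_snoc κ1 p0 n z b]
            rw [← Finset.mul_sum, hκs, mul_one]
        _ = 1 := ih

/-- Measure of a cylinder set. -/
lemma cyl_meas
    (hlaw : ∀ (n : ℕ) (x : ℕ → β), Pr {ω | ∀ i ≤ n, X i ω = x i}
      = Pr {ω | X 0 ω = x 0} * ENNReal.ofReal (∏ i ∈ Finset.range n, κ1 (x i) (x (i + 1))))
    (hp0def : ∀ s, p0 s = (Pr {ω | X 0 ω = s}).toReal)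
    (n : ℕ) (y : Fin (n + 1) → β) :
    Pr {ω | ∀ i : Fin (n + 1), X i ω = y i}
      = ENNReal.ofReal (pathW κ1 p0 n (pathExt n y)) := by
  have hset : {ω | ∀ i : Fin (n + 1), X i ω = y i}
      = {ω | ∀ i ≤ n, X i ω = pathExt n y i} := by
    ext ω
    constructor
    · intro h i hi
      rw [pathExt_le n y i hi]
      exact h ⟨i, by omega⟩
    · intro h i
      have := h i.1 (by omega)
      rw [pathExt_le n y i.1 (by omega)] at this
      simpa using this
  rw [hset, hlaw n (pathExt n y)]
  rw [show Pr {ω | X 0 ω = pathExt n y 0} = ENNReal.ofReal (p0 (pathExt n y 0)) by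
    rw [hp0def, ENNReal.ofReal_toReal (measure_ne_top Pr _)]]
  rw [← ENNReal.ofReal_mul (by rw [hp0def]; exact ENNReal.toReal_nonneg)]
  rfl

/-- A prefix event is measurable and its probability is a sum of path weights. -/
lemma prefix_event
    (hX : ∀ t, Measurable (X t))
    (hlaw : ∀ (n : ℕ) (x : ℕ → β), Pr {ω | ∀ i ≤ n, X i ω = x i}
      = Pr {ω | X 0 ω = x 0} * ENNReal.ofReal (∏ i ∈ Finset.range n, κ1 (x i) (x (i + 1))))
    (hp0def : ∀ s, p0 s = (Pr {ω | X 0 ω = s}).toReal)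
    (hκ0 : ∀ y b, 0 ≤ κ1 y b) (hp00 : ∀ s, 0 ≤ p0 s)
    (n : ℕ) (Φ : (ℕ → β) → Prop) [DecidablePred Φ]
    (hΦ : ∀ x x', (∀ i ≤ n, x i = x' i) → Φ x → Φ x') :
    MeasurableSet {ω | Φ fun i => X i ω} ∧
    Pr {ω | Φ fun i => X i ω}
      = ENNReal.ofReal (∑ y ∈ Finset.univ.filter
          (fun y : Fin (n + 1) → β => Φ (pathExt n y)), pathW κ1 p0 n (pathExt n y)) := by
  have hWnn : ∀ (x : ℕ → β), 0 ≤ pathW κ1 p0 n x := fun x =>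
    mul_nonneg (hp00 _) (Finset.prod_nonneg fun _ _ => hκ0 _ _)
  set Cyl : (Fin (n + 1) → β) → Set Ω := fun y => {ω | ∀ i : Fin (n + 1), X i ω = y i}
    with hCyl
  have hCylMeas : ∀ y, MeasurableSet (Cyl y) := by
    intro y
    have : Cyl y = ⋂ i : Fin (n + 1), (X i) ⁻¹' {y i} := by
      ext ω; simp [hCyl, Set.mem_iInter, Set.mem_preimage]
    rw [this]
    exact MeasurableSet.iInter fun i => hX i (measurableSet_singleton _)
  have hagree : ∀ ω, ∀ i ≤ n, pathExt n (fun j : Fin (n+1) => X j ω) i = X i ω := by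
    intro ω i hi
    rw [pathExt_le _ _ _ hi]
  have hseteq : {ω | Φ fun i => X i ω}
      = ⋃ y ∈ Finset.univ.filter (fun y : Fin (n + 1) → β => Φ (pathExt n y)), Cyl y := by
    ext ω
    simp only [Set.mem_setOf_eq, Set.mem_iUnion, Finset.mem_filter, Finset.mem_univ, true_and]
    constructor
    · intro h
      refine ⟨fun j => X j ω, ⟨?_, fun i => rfl⟩⟩
      exact hΦ _ _ (fun i hi => (hagree ω i hi).symm) h
    · rintro ⟨y, hy, hω⟩
      have hxy : (fun j : Fin (n+1) => X j ω) = y := funext hω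
      apply hΦ _ _ (fun i hi => hagree ω i hi)
      rw [hxy]
      exact hy
  constructor
  · rw [hseteq]
    exact (Finset.measurableSet_biUnion _ fun y _ => hCylMeas y)
  · rw [hseteq]
    rw [measure_biUnion_finset ?disj (fun y _ => hCylMeas y)]
    case disj =>
      intro y hy y' hy' hne
      refine Set.disjoint_left.mpr fun ω hω hω' => hne ?_
      exact funext fun i => (hω i).symm.trans (hω' i)
    rw [ENNReal.ofReal_sum_of_nonneg (fun y _ => hWnn _)]
    exact Finset.sum_congr rfl fun y _ => cyl_meas Pr X κ1 p0 hlaw hp0def n y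

/-- The initial distribution sums to 1. -/
lemma sum_p0 (hX : ∀ t, Measurable (X t))
    (hp0def : ∀ s, p0 s = (Pr {ω | X 0 ω = s}).toReal) :
    ∑ s, p0 s = 1 := by
  have : ∑ s, Pr {ω | X 0 ω = s} = 1 := by
    have hunion : (⋃ s ∈ (Finset.univ : Finset β), (X 0) ⁻¹' {s}) = Set.univ := by
      ext ω; simp
    have := measure_biUnion_finset (μ := Pr)
      (s := (Finset.univ : Finset β)) (f := fun s => (X 0) ⁻¹' {s})
      (by
        intro s _ s' _ hne
        refine Set.disjoint_left.mpr fun ω hω hω' => hne ?_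
        simp only [Set.mem_preimage, Set.mem_singleton_iff] at hω hω'
        rw [← hω, ← hω'])
      (fun s _ => hX 0 (measurableSet_singleton _))
    rw [hunion, measure_univ] at this
    exact this.symm
  calc ∑ s, p0 s = ∑ s, (Pr {ω | X 0 ω = s}).toReal :=
        Finset.sum_congr rfl fun s _ => hp0def s
    _ = (∑ s, Pr {ω | X 0 ω = s}).toReal :=
        (ENNReal.toReal_sum fun s _ => measure_ne_top Pr _).symm
    _ = 1 := by rw [this]; rfl


/-- Chernoff bound for an adapted weighted sum of conditionally mean-zero bounded
increments along the Markov chain. -/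
lemma chernoff_core
    (hX : ∀ t, Measurable (X t))
    (hlaw : ∀ (n : ℕ) (x : ℕ → β), Pr {ω | ∀ i ≤ n, X i ω = x i}
      = Pr {ω | X 0 ω = x 0} * ENNReal.ofReal (∏ i ∈ Finset.range n, κ1 (x i) (x (i + 1))))
    (hp0def : ∀ s, p0 s = (Pr {ω | X 0 ω = s}).toReal)
    (hκ0 : ∀ y b, 0 ≤ κ1 y b) (hκs : ∀ y, ∑ b, κ1 y b = 1)
    (ι0 τ0 : ℕ)
    (wgt : ℕ → (ℕ → β) → ℝ)
    (hwa : ∀ (e : ℕ) (x x' : ℕ → β), (∀ i ≤ ι0 + e, x i = x' i) → wgt e x = wgt e x')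
    (σ2 : ℝ) (hσ2 : 0 < σ2)
    (hwsq : ∀ x, ∑ e ∈ Finset.range τ0, (wgt e x) ^ 2 ≤ σ2)
    (Z : β → β → ℝ) (B : ℝ) (hB : 0 < B)
    (zlo : β → ℝ) (hZr : ∀ y b, Z y b ∈ Set.Icc (zlo y) (zlo y + B))
    (hZm : ∀ y, ∑ b, κ1 y b * Z y b = 0)
    (L : ℝ) (hL : 0 ≤ L) :
    Pr {ω | Real.sqrt (2 * L * σ2 * B ^ 2 / 4)
        < |∑ e ∈ Finset.range τ0, wgt e (fun i => X i ω) * Z (X (ι0 + e) ω) (X (ι0 + e + 1) ω)|}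
      ≤ ENNReal.ofReal (2 * Real.exp (-L)) := by
  classical
  have hp00 : ∀ s, 0 ≤ p0 s := fun s => (hp0def s) ▸ ENNReal.toReal_nonneg
  have hp0s : ∑ s, p0 s = 1 := sum_p0 Pr X p0 hX hp0def
  set G : ℕ → (ℕ → β) → ℝ :=
    fun d x => ∑ e ∈ Finset.range d, wgt e x * Z (x (ι0 + e)) (x (ι0 + e + 1)) with hGdef
  set V : ℕ → (ℕ → β) → ℝ := fun d x => ∑ e ∈ Finset.range d, (wgt e x) ^ 2 with hVdef
  set thr : ℝ := Real.sqrt (2 * L * σ2 * B ^ 2 / 4) with hthrdef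
  have hthr0 : 0 ≤ thr := Real.sqrt_nonneg _
  have hthrsq : thr ^ 2 = 2 * L * σ2 * B ^ 2 / 4 := by
    rw [hthrdef, Real.sq_sqrt]
    positivity
  set lam0 : ℝ := 4 * thr / (B ^ 2 * σ2) with hlam0def
  have hlam00 : 0 ≤ lam0 := by positivity
  set cc : ℝ := lam0 ^ 2 * B ^ 2 / 8 with hccdef
  have hcc0 : 0 ≤ cc := by positivity
  have hexpid : cc * σ2 - lam0 * thr = -L := by
    rw [hccdef, hlam0def]
    have hB2 : (B:ℝ) ^ 2 ≠ 0 := by positivity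
    have hσ2' : σ2 ≠ 0 := ne_of_gt hσ2
    field_simp
    nlinarith [hthrsq]
  -- one-step mgf bound
  have step : ∀ (θ : ℝ) (y : β),
      ∑ b, κ1 y b * Real.exp (θ * Z y b) ≤ Real.exp ((θ * B) ^ 2 / 8) := by
    intro θ y
    have hmean : ∑ b, κ1 y b * (θ * Z y b) = 0 := by
      calc ∑ b, κ1 y b * (θ * Z y b) = θ * ∑ b, κ1 y b * Z y b := by
            rw [Finset.mul_sum]; exact Finset.sum_congr rfl fun b _ => by ring
        _ = 0 := by rw [hZm y, mul_zero]
    rcases le_or_gt 0 θ with hθ | hθ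
    · have h := sum_mul_exp_le (κ1 y) (fun b => θ * Z y b) (θ * zlo y) (θ * (zlo y + B))
        (hκ0 y) (hκs y)
        (fun b => ⟨mul_le_mul_of_nonneg_left (hZr y b).1 hθ,
                   mul_le_mul_of_nonneg_left (hZr y b).2 hθ⟩)
        hmean
      refine h.trans (le_of_eq ?_)
      congr 1
      ring
    · have h := sum_mul_exp_le (κ1 y) (fun b => θ * Z y b) (θ * (zlo y + B)) (θ * zlo y)
        (hκ0 y) (hκs y)
        (fun b => ⟨mul_le_mul_of_nonpos_left (hZr y b).2 hθ.le,
                   mul_le_mul_of_nonpos_left (hZr y b).1 hθ.le⟩)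
        hmean
      refine h.trans (le_of_eq ?_)
      congr 1
      ring
  -- mgf bound along the chain
  have mgf : ∀ (c1 : ℝ), c1 ^ 2 = lam0 ^ 2 → ∀ (d : ℕ),
      ∑ y : Fin (ι0 + d + 1) → β, pathW κ1 p0 (ι0 + d) (pathExt (ι0 + d) y)
        * Real.exp (c1 * G d (pathExt (ι0 + d) y) - cc * V d (pathExt (ι0 + d) y)) ≤ 1 := by
    intro c1 hc1 d
    induction d with
    | zero =>
        calc ∑ y : Fin (ι0 + 0 + 1) → β, pathW κ1 p0 (ι0 + 0) (pathExt (ι0 + 0) y)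
              * Real.exp (c1 * G 0 (pathExt (ι0 + 0) y) - cc * V 0 (pathExt (ι0 + 0) y))
            = ∑ y : Fin (ι0 + 0 + 1) → β, pathW κ1 p0 (ι0 + 0) (pathExt (ι0 + 0) y) := by
              apply Finset.sum_congr rfl
              intro y _
              rw [show c1 * G 0 (pathExt (ι0 + 0) y) - cc * V 0 (pathExt (ι0 + 0) y) = 0 by
                simp [hGdef, hVdef]]
              rw [Real.exp_zero, mul_one]
          _ = 1 := sum_pathW κ1 p0 hκs hp0s (ι0 + 0)
          _ ≤ 1 := le_refl _
    | succ d ih =>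
        have hpeel := sum_pi_snoc (n := ι0 + d) (fun y : Fin (ι0 + d + 2) → β =>
          pathW κ1 p0 (ι0 + d + 1) (pathExt (ι0 + d + 1) y)
            * Real.exp (c1 * G (d+1) (pathExt (ι0 + d + 1) y)
                - cc * V (d+1) (pathExt (ι0 + d + 1) y)))
        calc ∑ y : Fin (ι0 + (d+1) + 1) → β, pathW κ1 p0 (ι0 + (d+1)) (pathExt (ι0 + (d+1)) y)
              * Real.exp (c1 * G (d+1) (pathExt (ι0 + (d+1)) y)
                  - cc * V (d+1) (pathExt (ι0 + (d+1)) y))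
            = ∑ z : Fin (ι0 + d + 1) → β, ∑ b : β,
                pathW κ1 p0 (ι0 + d + 1) (pathExt (ι0 + d + 1) (Fin.snoc z b))
                * Real.exp (c1 * G (d+1) (pathExt (ι0 + d + 1) (Fin.snoc z b))
                    - cc * V (d+1) (pathExt (ι0 + d + 1) (Fin.snoc z b))) := hpeel
          _ ≤ ∑ z : Fin (ι0 + d + 1) → β, pathW κ1 p0 (ι0 + d) (pathExt (ι0 + d) z)
                * Real.exp (c1 * G d (pathExt (ι0 + d) z) - cc * V d (pathExt (ι0 + d) z)) := by
              apply Finset.sum_le_sum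
              intro z _
              have inner : ∀ b : β,
                  pathW κ1 p0 (ι0 + d + 1) (pathExt (ι0 + d + 1) (Fin.snoc z b))
                  * Real.exp (c1 * G (d+1) (pathExt (ι0 + d + 1) (Fin.snoc z b))
                      - cc * V (d+1) (pathExt (ι0 + d + 1) (Fin.snoc z b)))
                = (pathW κ1 p0 (ι0 + d) (pathExt (ι0 + d) z)
                    * Real.exp (c1 * G d (pathExt (ι0 + d) z) - cc * V d (pathExt (ι0 + d) z)))
                  * (κ1 (pathExt (ι0 + d) z (ι0 + d)) b
                    * Real.exp (c1 * (wgt d (pathExt (ι0 + d) z)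
                          * Z (pathExt (ι0 + d) z (ι0 + d)) b)
                        - cc * (wgt d (pathExt (ι0 + d) z)) ^ 2)) := by
                intro b
                have hag : ∀ i, i ≤ ι0 + d → pathExt (ι0 + d + 1) (Fin.snoc z b) i
                    = pathExt (ι0 + d) z i := fun i hi => pathExt_snoc _ _ _ _ hi
                have htop : pathExt (ι0 + d + 1) (Fin.snoc z b) (ι0 + d + 1) = b :=
                  pathExt_snoc_top _ _ _ _ (le_refl _)
                have hGd : G d (pathExt (ι0 + d + 1) (Fin.snoc z b))
                    = G d (pathExt (ι0 + d) z) := by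
                  simp only [hGdef]
                  apply Finset.sum_congr rfl
                  intro e he
                  rw [Finset.mem_range] at he
                  rw [hwa e _ _ (fun i hi => hag i (by omega)), hag _ (by omega),
                    hag _ (by omega)]
                have hVd : V d (pathExt (ι0 + d + 1) (Fin.snoc z b))
                    = V d (pathExt (ι0 + d) z) := by
                  simp only [hVdef]
                  apply Finset.sum_congr rfl
                  intro e he
                  rw [Finset.mem_range] at he
                  rw [hwa e _ _ (fun i hi => hag i (by omega))]
                have hwd : wgt d (pathExt (ι0 + d + 1) (Fin.snoc z b))
                    = wgt d (pathExt (ι0 + d) z) := hwa d _ _ (fun i hi => hag i hi)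
                have hGs : G (d+1) (pathExt (ι0 + d + 1) (Fin.snoc z b))
                    = G d (pathExt (ι0 + d) z)
                      + wgt d (pathExt (ι0 + d) z)
                        * Z (pathExt (ι0 + d) z (ι0 + d)) b := by
                  simp only [hGdef]
                  rw [Finset.sum_range_succ]
                  simp only [hGdef] at hGd
                  rw [hGd, hwd, hag _ (le_refl _), htop]
                have hVs : V (d+1) (pathExt (ι0 + d + 1) (Fin.snoc z b))
                    = V d (pathExt (ι0 + d) z) + (wgt d (pathExt (ι0 + d) z)) ^ 2 := by
                  simp only [hVdef]
                  rw [Finset.sum_range_succ]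
                  simp only [hVdef] at hVd
                  rw [hVd, hwd]
                rw [hGs, hVs, pathW_snoc]
                rw [show c1 * (G d (pathExt (ι0 + d) z)
                      + wgt d (pathExt (ι0 + d) z) * Z (pathExt (ι0 + d) z (ι0 + d)) b)
                    - cc * (V d (pathExt (ι0 + d) z) + (wgt d (pathExt (ι0 + d) z)) ^ 2)
                  = (c1 * G d (pathExt (ι0 + d) z) - cc * V d (pathExt (ι0 + d) z))
                    + (c1 * (wgt d (pathExt (ι0 + d) z) * Z (pathExt (ι0 + d) z (ι0 + d)) b)
                        - cc * (wgt d (pathExt (ι0 + d) z)) ^ 2) from by ring]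
                rw [Real.exp_add]
                ring
              rw [Finset.sum_congr rfl (fun b _ => inner b), ← Finset.mul_sum]
              have hWEnn : 0 ≤ pathW κ1 p0 (ι0 + d) (pathExt (ι0 + d) z)
                  * Real.exp (c1 * G d (pathExt (ι0 + d) z) - cc * V d (pathExt (ι0 + d) z)) :=
                mul_nonneg (pathW_nonneg _ _ hκ0 hp00 _ _) (Real.exp_pos _).le
              have hinner : ∑ b, κ1 (pathExt (ι0 + d) z (ι0 + d)) b
                  * Real.exp (c1 * (wgt d (pathExt (ι0 + d) z)
                        * Z (pathExt (ι0 + d) z (ι0 + d)) b)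
                      - cc * (wgt d (pathExt (ι0 + d) z)) ^ 2) ≤ 1 := by
                set w := wgt d (pathExt (ι0 + d) z) with hw
                set yy := pathExt (ι0 + d) z (ι0 + d) with hyy
                have h1 : ∀ b, κ1 yy b * Real.exp (c1 * (w * Z yy b) - cc * w ^ 2)
                    = (κ1 yy b * Real.exp ((c1 * w) * Z yy b)) * Real.exp (-(cc * w ^ 2)) := by
                  intro b
                  rw [show c1 * (w * Z yy b) - cc * w ^ 2
                      = (c1 * w) * Z yy b + (-(cc * w ^ 2)) from by ring, Real.exp_add]
                  ring
                rw [Finset.sum_congr rfl (fun b _ => h1 b), ← Finset.sum_mul]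
                have h2 := step (c1 * w) yy
                have h3 : ((c1 * w) * B) ^ 2 / 8 = cc * w ^ 2 := by
                  have he : ((c1 * w) * B) ^ 2 = c1 ^ 2 * (w ^ 2 * B ^ 2) := by ring
                  rw [he, hc1, hccdef]
                  ring
                calc (∑ b, κ1 yy b * Real.exp ((c1 * w) * Z yy b)) * Real.exp (-(cc * w ^ 2))
                    ≤ Real.exp (((c1 * w) * B) ^ 2 / 8) * Real.exp (-(cc * w ^ 2)) :=
                      mul_le_mul_of_nonneg_right h2 (Real.exp_pos _).le
                  _ = 1 := by rw [h3, ← Real.exp_add]; simp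
              calc pathW κ1 p0 (ι0 + d) (pathExt (ι0 + d) z)
                    * Real.exp (c1 * G d (pathExt (ι0 + d) z) - cc * V d (pathExt (ι0 + d) z))
                    * (∑ b, κ1 (pathExt (ι0 + d) z (ι0 + d)) b
                      * Real.exp (c1 * (wgt d (pathExt (ι0 + d) z)
                            * Z (pathExt (ι0 + d) z (ι0 + d)) b)
                          - cc * (wgt d (pathExt (ι0 + d) z)) ^ 2))
                  ≤ pathW κ1 p0 (ι0 + d) (pathExt (ι0 + d) z)
                    * Real.exp (c1 * G d (pathExt (ι0 + d) z) - cc * V d (pathExt (ι0 + d) z))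
                    * 1 := mul_le_mul_of_nonneg_left hinner hWEnn
                _ = _ := mul_one _
          _ ≤ 1 := ih
  -- the event as a prefix event
  have hΦad : ∀ (x x' : ℕ → β), (∀ i ≤ ι0 + τ0, x i = x' i) → G τ0 x = G τ0 x' := by
    intro x x' hxx
    apply Finset.sum_congr rfl
    intro e he
    rw [Finset.mem_range] at he
    rw [hwa e _ _ (fun i hi => hxx i (by omega)), hxx _ (by omega), hxx _ (by omega)]
  have hpe := prefix_event Pr X κ1 p0 hX hlaw hp0def hκ0 hp00 (ι0 + τ0)
    (fun x => thr < |G τ0 x|)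
    (fun x x' h hx => by
      show thr < |G τ0 x'|
      rw [← hΦad x x' h]
      exact hx)
  have hsetmatch : {ω | thr
        < |∑ e ∈ Finset.range τ0, wgt e (fun i => X i ω) * Z (X (ι0 + e) ω) (X (ι0 + e + 1) ω)|}
      = {ω | (fun x => thr < |G τ0 x|) fun i => X i ω} := rfl
  rw [hsetmatch, hpe.2]
  apply ENNReal.ofReal_le_ofReal
  rcases eq_or_lt_of_le hthr0 with hthr00 | hthrpos
  · -- thr = 0, hence L = 0; trivial bound by total mass
    have hLz : L = 0 := by nlinarith [hthrsq, sq_nonneg B]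
    calc ∑ y ∈ Finset.univ.filter
          (fun y : Fin (ι0 + τ0 + 1) → β => thr < |G τ0 (pathExt (ι0 + τ0) y)|),
          pathW κ1 p0 (ι0 + τ0) (pathExt (ι0 + τ0) y)
        ≤ ∑ y : Fin (ι0 + τ0 + 1) → β, pathW κ1 p0 (ι0 + τ0) (pathExt (ι0 + τ0) y) :=
          Finset.sum_le_sum_of_subset_of_nonneg (Finset.filter_subset _ _)
            (fun y _ _ => pathW_nonneg _ _ hκ0 hp00 _ _)
      _ = 1 := sum_pathW κ1 p0 hκs hp0s (ι0 + τ0)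
      _ ≤ 2 * Real.exp (-L) := by rw [hLz]; norm_num
  · have hlam0pos : 0 < lam0 := by rw [hlam0def]; positivity
    have tail : ∀ (c1 : ℝ), c1 ^ 2 = lam0 ^ 2 →
        ∑ y ∈ Finset.univ.filter
          (fun y : Fin (ι0 + τ0 + 1) → β => thr * lam0 < c1 * G τ0 (pathExt (ι0 + τ0) y)),
          pathW κ1 p0 (ι0 + τ0) (pathExt (ι0 + τ0) y) ≤ Real.exp (-L) := by
      intro c1 hc1
      have hbound : ∀ y : Fin (ι0 + τ0 + 1) → β,
          thr * lam0 < c1 * G τ0 (pathExt (ι0 + τ0) y) →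
          pathW κ1 p0 (ι0 + τ0) (pathExt (ι0 + τ0) y)
            ≤ (pathW κ1 p0 (ι0 + τ0) (pathExt (ι0 + τ0) y)
                * Real.exp (c1 * G τ0 (pathExt (ι0 + τ0) y)
                    - cc * V τ0 (pathExt (ι0 + τ0) y)))
              * Real.exp (cc * σ2 - lam0 * thr) := by
        intro y hy
        have hfac : 1 ≤ Real.exp (c1 * G τ0 (pathExt (ι0 + τ0) y)
            - cc * V τ0 (pathExt (ι0 + τ0) y)) * Real.exp (cc * σ2 - lam0 * thr) := by
          rw [← Real.exp_add]
          rw [show (1:ℝ) = Real.exp 0 from (Real.exp_zero).symm]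
          apply Real.exp_le_exp.mpr
          have h1 : V τ0 (pathExt (ι0 + τ0) y) ≤ σ2 := hwsq _
          nlinarith [hy]
        calc pathW κ1 p0 (ι0 + τ0) (pathExt (ι0 + τ0) y)
            = pathW κ1 p0 (ι0 + τ0) (pathExt (ι0 + τ0) y) * 1 := (mul_one _).symm
          _ ≤ _ := by
              rw [mul_assoc]
              exact mul_le_mul_of_nonneg_left hfac (pathW_nonneg _ _ hκ0 hp00 _ _)
      calc ∑ y ∈ Finset.univ.filter
            (fun y : Fin (ι0 + τ0 + 1) → β => thr * lam0 < c1 * G τ0 (pathExt (ι0 + τ0) y)),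
            pathW κ1 p0 (ι0 + τ0) (pathExt (ι0 + τ0) y)
          ≤ ∑ y ∈ Finset.univ.filter
            (fun y : Fin (ι0 + τ0 + 1) → β => thr * lam0 < c1 * G τ0 (pathExt (ι0 + τ0) y)),
            (pathW κ1 p0 (ι0 + τ0) (pathExt (ι0 + τ0) y)
              * Real.exp (c1 * G τ0 (pathExt (ι0 + τ0) y) - cc * V τ0 (pathExt (ι0 + τ0) y)))
              * Real.exp (cc * σ2 - lam0 * thr) :=
            Finset.sum_le_sum (fun y hy => hbound y (Finset.mem_filter.mp hy).2)
        _ ≤ ∑ y : Fin (ι0 + τ0 + 1) → β,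
            (pathW κ1 p0 (ι0 + τ0) (pathExt (ι0 + τ0) y)
              * Real.exp (c1 * G τ0 (pathExt (ι0 + τ0) y) - cc * V τ0 (pathExt (ι0 + τ0) y)))
              * Real.exp (cc * σ2 - lam0 * thr) :=
            Finset.sum_le_sum_of_subset_of_nonneg (Finset.filter_subset _ _)
              (fun y _ _ => mul_nonneg (mul_nonneg (pathW_nonneg _ _ hκ0 hp00 _ _)
                (Real.exp_pos _).le) (Real.exp_pos _).le)
        _ = (∑ y : Fin (ι0 + τ0 + 1) → β,
            pathW κ1 p0 (ι0 + τ0) (pathExt (ι0 + τ0) y)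
              * Real.exp (c1 * G τ0 (pathExt (ι0 + τ0) y) - cc * V τ0 (pathExt (ι0 + τ0) y)))
              * Real.exp (cc * σ2 - lam0 * thr) := by rw [← Finset.sum_mul]
        _ ≤ 1 * Real.exp (cc * σ2 - lam0 * thr) :=
            mul_le_mul_of_nonneg_right (mgf c1 hc1 τ0) (Real.exp_pos _).le
        _ = Real.exp (-L) := by rw [one_mul, hexpid]
    have hsplit : Finset.univ.filter
          (fun y : Fin (ι0 + τ0 + 1) → β => thr < |G τ0 (pathExt (ι0 + τ0) y)|)
        ⊆ Finset.univ.filter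
            (fun y : Fin (ι0 + τ0 + 1) → β => thr * lam0 < lam0 * G τ0 (pathExt (ι0 + τ0) y))
          ∪ Finset.univ.filter
            (fun y : Fin (ι0 + τ0 + 1) → β => thr * lam0 < (-lam0) * G τ0 (pathExt (ι0 + τ0) y)) := by
      intro y hy
      rw [Finset.mem_filter] at hy
      rw [Finset.mem_union, Finset.mem_filter, Finset.mem_filter]
      rcases lt_abs.mp hy.2 with h | h
      · left
        refine ⟨Finset.mem_univ _, ?_⟩
        calc thr * lam0 < G τ0 (pathExt (ι0 + τ0) y) * lam0 :=
              (mul_lt_mul_iff_of_pos_right hlam0pos).mpr h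
          _ = lam0 * G τ0 (pathExt (ι0 + τ0) y) := mul_comm _ _
      · right
        refine ⟨Finset.mem_univ _, ?_⟩
        calc thr * lam0 < -G τ0 (pathExt (ι0 + τ0) y) * lam0 :=
              (mul_lt_mul_iff_of_pos_right hlam0pos).mpr h
          _ = (-lam0) * G τ0 (pathExt (ι0 + τ0) y) := by ring
    have hdisj : Disjoint
        (Finset.univ.filter
          (fun y : Fin (ι0 + τ0 + 1) → β => thr * lam0 < lam0 * G τ0 (pathExt (ι0 + τ0) y)))
        (Finset.univ.filter
          (fun y : Fin (ι0 + τ0 + 1) → β => thr * lam0 < (-lam0) * G τ0 (pathExt (ι0 + τ0) y))) := by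
      rw [Finset.disjoint_left]
      intro y hP hM
      rw [Finset.mem_filter] at hP hM
      nlinarith [hP.2, hM.2, mul_nonneg hthr0 hlam00]
    calc ∑ y ∈ Finset.univ.filter
          (fun y : Fin (ι0 + τ0 + 1) → β => thr < |G τ0 (pathExt (ι0 + τ0) y)|),
          pathW κ1 p0 (ι0 + τ0) (pathExt (ι0 + τ0) y)
        ≤ ∑ y ∈ (Finset.univ.filter
            (fun y : Fin (ι0 + τ0 + 1) → β => thr * lam0 < lam0 * G τ0 (pathExt (ι0 + τ0) y))
          ∪ Finset.univ.filter
            (fun y : Fin (ι0 + τ0 + 1) → β => thr * lam0 < (-lam0) * G τ0 (pathExt (ι0 + τ0) y))),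
          pathW κ1 p0 (ι0 + τ0) (pathExt (ι0 + τ0) y) :=
          Finset.sum_le_sum_of_subset_of_nonneg hsplit
            (fun y _ _ => pathW_nonneg _ _ hκ0 hp00 _ _)
      _ = (∑ y ∈ Finset.univ.filter
            (fun y : Fin (ι0 + τ0 + 1) → β => thr * lam0 < lam0 * G τ0 (pathExt (ι0 + τ0) y)),
            pathW κ1 p0 (ι0 + τ0) (pathExt (ι0 + τ0) y))
          + ∑ y ∈ Finset.univ.filter
            (fun y : Fin (ι0 + τ0 + 1) → β => thr * lam0 < (-lam0) * G τ0 (pathExt (ι0 + τ0) y)),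
            pathW κ1 p0 (ι0 + τ0) (pathExt (ι0 + τ0) y) := Finset.sum_union hdisj
      _ ≤ Real.exp (-L) + Real.exp (-L) :=
          add_le_add (tail lam0 rfl) (tail (-lam0) (by ring))
      _ = 2 * Real.exp (-L) := by ring


variable {β : Type*} [DecidableEq β]

/-- Number of visits to `sa` among steps `ι, ι+1, ..., ι+e-1`. -/
def cntD (x : ℕ → β) (ι : ℕ) (sa : β) (e : ℕ) : ℕ :=
  ((Finset.range e).filter (fun e' => x (ι + e') = sa)).card

/-- Weight used in the truncated martingale sum. -/
def wgtD (η : ℝ) (j : ℕ) (ι : ℕ) (sa : β) (e : ℕ) (x : ℕ → β) : ℝ :=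
  if x (ι + e) = sa ∧ cntD x ι sa e < j then (1 - η) ^ (j - 1 - cntD x ι sa e) else 0

/-- Variance proxy. -/
noncomputable def sig2 (η : ℝ) (j : ℕ) : ℝ := ∑ i ∈ Finset.range j, ((1 - η) ^ 2) ^ i

lemma cntD_succ (x : ℕ → β) (ι : ℕ) (sa : β) (D : ℕ) :
    cntD x ι sa (D + 1) = cntD x ι sa D + (if x (ι + D) = sa then 1 else 0) := by
  unfold cntD
  rw [Finset.range_add_one, Finset.filter_insert]
  by_cases h : x (ι + D) = sa
  · rw [if_pos h, if_pos h, Finset.card_insert_of_notMem (by simp)]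
  · rw [if_neg h, if_neg h, add_zero]

lemma cntD_le (x : ℕ → β) (ι : ℕ) (sa : β) (e : ℕ) : cntD x ι sa e ≤ e := by
  calc cntD x ι sa e ≤ (Finset.range e).card := Finset.card_filter_le _ _
    _ = e := Finset.card_range e

lemma cntD_mono (x : ℕ → β) (ι : ℕ) (sa : β) {d e : ℕ} (h : d ≤ e) :
    cntD x ι sa d ≤ cntD x ι sa e :=
  Finset.card_le_card (Finset.filter_subset_filter _ (by simpa using Finset.range_subset_range.mpr h))

lemma cntD_lt_of_visit (x : ℕ → β) (ι : ℕ) (sa : β) {e d : ℕ} (he : e < d)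
    (hv : x (ι + e) = sa) : cntD x ι sa e < cntD x ι sa d := by
  have h1 : cntD x ι sa (e + 1) = cntD x ι sa e + 1 := by
    rw [cntD_succ, if_pos hv]
  have h2 : cntD x ι sa (e + 1) ≤ cntD x ι sa d := cntD_mono x ι sa he
  omega

lemma wgtD_adapted (η : ℝ) (j ι : ℕ) (sa : β) (e : ℕ) (x x' : ℕ → β)
    (h : ∀ i ≤ ι + e, x i = x' i) : wgtD η j ι sa e x = wgtD η j ι sa e x' := by
  unfold wgtD
  have hc : cntD x ι sa e = cntD x' ι sa e := by
    unfold cntD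
    congr 1
    apply Finset.filter_congr
    intro e' he'
    rw [Finset.mem_range] at he'
    rw [h (ι + e') (by omega)]
  rw [hc, h (ι + e) (by omega)]

lemma wgtD_sq_sum_eq (η : ℝ) (j ι : ℕ) (sa : β) (x : ℕ → β) (D : ℕ) :
    ∑ e ∈ Finset.range D, (wgtD η j ι sa e x) ^ 2
      = ∑ i ∈ Finset.range (min (cntD x ι sa D) j), ((1 - η) ^ 2) ^ (j - 1 - i) := by
  induction D with
  | zero => simp [cntD]
  | succ D ih =>
      rw [Finset.sum_range_succ, ih, cntD_succ]
      by_cases hv : x (ι + D) = sa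
      · rw [if_pos hv]
        by_cases hj : cntD x ι sa D < j
        · have h1 : wgtD η j ι sa D x = (1 - η) ^ (j - 1 - cntD x ι sa D) := by
            rw [wgtD, if_pos ⟨hv, hj⟩]
          have h2 : min (cntD x ι sa D + 1) j = min (cntD x ι sa D) j + 1 := by omega
          have h3 : min (cntD x ι sa D) j = cntD x ι sa D := by omega
          rw [h1, h2, Finset.sum_range_succ, h3]
          congr 1
          rw [← pow_mul, ← pow_mul, Nat.mul_comm]
        · have h1 : wgtD η j ι sa D x = 0 := by
            rw [wgtD, if_neg (by tauto)]
          have h2 : min (cntD x ι sa D + 1) j = min (cntD x ι sa D) j := by omega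
          rw [h1, h2]
          norm_num
      · rw [if_neg hv]
        have h1 : wgtD η j ι sa D x = 0 := by
          rw [wgtD, if_neg (by tauto)]
        rw [h1]
        norm_num
lemma wgtD_sq_sum_le (η : ℝ) (hη1 : η ≤ 1) (j ι : ℕ) (sa : β) (τ0 : ℕ) (x : ℕ → β) :
    ∑ e ∈ Finset.range τ0, (wgtD η j ι sa e x) ^ 2 ≤ sig2 η j := by
  rw [wgtD_sq_sum_eq]
  have h1 : ∑ i ∈ Finset.range (min (cntD x ι sa τ0) j), ((1 - η) ^ 2) ^ (j - 1 - i)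
      ≤ ∑ i ∈ Finset.range j, ((1 - η) ^ 2) ^ (j - 1 - i) := by
    apply Finset.sum_le_sum_of_subset_of_nonneg
    · apply Finset.range_subset_range.mpr
      omega
    · intro i _ _
      positivity
  refine h1.trans (le_of_eq ?_)
  rw [show (fun i => ((1 - η) ^ 2) ^ (j - 1 - i)) = fun i => (fun i' => ((1-η)^2)^i') (j - 1 - i) from rfl]
  exact Finset.sum_range_reflect (fun i' => ((1 - η) ^ 2) ^ i') j

lemma wgtD_nonneg (η : ℝ) (hη1 : η ≤ 1) (j ι : ℕ) (sa : β) (e : ℕ) (x : ℕ → β) :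
    0 ≤ wgtD η j ι sa e x := by
  unfold wgtD
  split
  · exact pow_nonneg (by linarith) _
  · exact le_refl 0

/-- Key recursion for the truncated martingale value at a new visit. -/
lemma gval_succ (η : ℝ) (Z2 : ℕ → ℝ) (ι : ℕ) (sa : β) (τ0 : ℕ) (x : ℕ → β)
    (d : ℕ) (hd : d < τ0) (hv : x (ι + d) = sa) :
    ∑ e ∈ Finset.range τ0, wgtD η (cntD x ι sa d + 1) ι sa e x * Z2 e
      = (1 - η) * (∑ e ∈ Finset.range τ0, wgtD η (cntD x ι sa d) ι sa e x * Z2 e) + Z2 d := by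
  set j := cntD x ι sa d with hj
  have hterm : ∀ e, wgtD η (j + 1) ι sa e x * Z2 e
      = (1 - η) * (wgtD η j ι sa e x * Z2 e)
        + (if x (ι + e) = sa ∧ cntD x ι sa e = j then Z2 e else 0) := by
    intro e
    by_cases hve : x (ι + e) = sa
    · rcases lt_trichotomy (cntD x ι sa e) j with hlt | heq | hgt
      · rw [wgtD, if_pos ⟨hve, by omega⟩, wgtD, if_pos ⟨hve, hlt⟩, if_neg (by omega)]
        rw [show j + 1 - 1 - cntD x ι sa e = (j - 1 - cntD x ι sa e) + 1 from by omega]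
        rw [pow_succ]
        ring
      · rw [wgtD, if_pos ⟨hve, by omega⟩, wgtD, if_neg (by omega), if_pos ⟨hve, heq⟩]
        rw [show j + 1 - 1 - cntD x ι sa e = 0 from by omega]
        ring
      · rw [wgtD, if_neg (by omega), wgtD, if_neg (by omega), if_neg (by omega)]
        ring
    · rw [wgtD, if_neg (by tauto), wgtD, if_neg (by tauto), if_neg (by tauto)]
      ring
  rw [Finset.sum_congr rfl (fun e _ => hterm e), Finset.sum_add_distrib, ← Finset.mul_sum]
  congr 1
  rw [Finset.sum_eq_single_of_mem d (Finset.mem_range.mpr hd)]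
  · rw [if_pos ⟨hv, rfl⟩]
  · intro e _ hne
    rw [if_neg]
    rintro ⟨hve, hce⟩
    rcases Nat.lt_or_ge e d with h | h
    · have := cntD_lt_of_visit x ι sa h hve
      omega
    · have hlt : d < e := by omega
      have := cntD_lt_of_visit x ι sa hlt hv
      omega

end FedAux

open FedAux

theorem fedAsynQ_local_error_growth_bound
    {S A : Type*} [Fintype S] [Fintype A] [Nonempty S] [Nonempty A]
    [DecidableEq S] [DecidableEq A]
    [MeasurableSpace S] [MeasurableSingletonClass S]
    [MeasurableSpace A] [MeasurableSingletonClass A]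
    {Ω : Type*} [MeasurableSpace Ω] (Pr : Measure Ω) [IsProbabilityMeasure Pr]
    -- the MDP
    (P : S × A → S → ℝ) (r : S × A → ℝ) (γ : ℝ)
    (hP0 : ∀ sa s', 0 ≤ P sa s') (hP1 : ∀ sa, ∑ s', P sa s' = 1)
    (hr : ∀ sa, r sa ∈ Set.Icc (0 : ℝ) 1) (hγ : γ ∈ Set.Ico (0 : ℝ) 1)
    -- the optimal Q-function (Bellman fixed point)
    (Qstar : S × A → ℝ)
    (hQstar : ∀ sa, Qstar sa
        = r sa + γ * ∑ s', P sa s' * vmax fun a' => Qstar (s', a'))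
    -- algorithm parameters
    (K : ℕ) (hK : 0 < K) (T τ : ℕ) (hT : 0 < T) (hτ : 0 < τ) (hτT : τ ∣ T)
    (η : ℝ) (hη0 : 0 < η) (hη1 : η < 1)
    (δ : ℝ) (hδ : δ ∈ Set.Ioo (0 : ℝ) 1)
    -- behavior policies and the induced Markov chains on `S × A`
    (πb : Fin K → S → A → ℝ)
    (hπb0 : ∀ k s a, 0 ≤ πb k s a) (hπb1 : ∀ k s, ∑ a, πb k s a = 1)
    (κ : Fin K → S × A → S × A → ℝ)
    (hκ : ∀ k sa sa', κ k sa sa' = P sa sa'.1 * πb k sa'.1 sa'.2)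
    -- the Markovian trajectories of the agents
    (traj : Fin K → ℕ → Ω → S × A)
    (htraj_meas : ∀ k t, Measurable (traj k t))
    (hMarkov : ∀ (k : Fin K) (n : ℕ) (x : ℕ → S × A),
      Pr {ω | ∀ i ≤ n, traj k i ω = x i}
        = Pr {ω | traj k 0 ω = x 0}
            * ENNReal.ofReal (∏ i ∈ Finset.range n, κ k (x i) (x (i + 1))))
    (hindep : iIndepFun (fun (k : Fin K) ω t => traj k t ω) Pr)
    -- the iterates of FedAsynQ with arbitrary nonnegative aggregation weights
    (α : ℕ → Fin K → S × A → Ω → ℝ)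
    (hα0 : ∀ t k sa ω, 0 ≤ α t k sa ω)
    (hα1 : ∀ t sa ω, ∑ k : Fin K, α t k sa ω = 1)
    (Q0 : S × A → ℝ) (hQ0 : ∀ sa, Q0 sa ∈ Set.Icc (0 : ℝ) (1 / (1 - γ)))
    (Q Qhalf : ℕ → Fin K → S × A → Ω → ℝ)
    (hinit : ∀ k sa ω, Q 0 k sa ω = Q0 sa)
    (hupd : ∀ t k sa ω, Qhalf (t + 1) k sa ω
        = if sa = traj k t ω then
            (1 - η) * Q t k sa ω
              + η * (r sa + γ * vmax fun a' => Q t k ((traj k (t + 1) ω).1, a') ω)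
          else Q t k sa ω)
    (havg : ∀ t k sa ω, Q (t + 1) k sa ω
        = if τ ∣ (t + 1) then
            ∑ k' : Fin K, α (t + 1) k' sa ω * Qhalf (t + 1) k' sa ω
          else Qhalf (t + 1) k sa ω)
    -- the learning rate condition `ητ ≤ 1/2`
    (hητ : η * τ ≤ 1 / 2) :
    Pr {ω | ∀ k : Fin K, ∀ u < T,
          supNorm (fun sa : S × A => Qstar sa - Q u k sa ω)
            ≤ supNorm (fun sa : S × A => Qstar sa - Q (τ * (u / τ)) k sa ω)
              + 2 * γ / (1 - γ)
                * Real.sqrt (η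
                    * Real.log ((Fintype.card S) * (Fintype.card A) * T * K / δ))}
      ≥ ENNReal.ofReal (1 - δ) := by
  classical
  obtain ⟨hγ0, hγ1⟩ := hγ
  obtain ⟨hδ0, hδ1⟩ := hδ
  have h1γ : (0:ℝ) < 1 - γ := by linarith
  have hextra_nn : (0:ℝ) ≤ 2 * γ / (1 - γ)
      * Real.sqrt (η * Real.log ((Fintype.card S) * (Fintype.card A) * T * K / δ)) :=
    mul_nonneg (div_nonneg (by linarith) h1γ.le) (Real.sqrt_nonneg _)
  by_cases hT1 : T = 1
  · have huniv : {ω : Ω | ∀ k : Fin K, ∀ u < T,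
        supNorm (fun sa : S × A => Qstar sa - Q u k sa ω)
          ≤ supNorm (fun sa : S × A => Qstar sa - Q (τ * (u / τ)) k sa ω)
            + 2 * γ / (1 - γ)
              * Real.sqrt (η
                  * Real.log ((Fintype.card S) * (Fintype.card A) * T * K / δ))}
        = Set.univ := by
      rw [Set.eq_univ_iff_forall]
      intro ω k u hu
      have hu0 : u = 0 := by omega
      subst hu0
      rw [show τ * (0 / τ) = 0 by simp]
      exact le_add_of_nonneg_right hextra_nn
    rw [huniv, measure_univ]
    exact ENNReal.ofReal_le_one.mpr (by linarith)
  have hT2 : 2 ≤ T := by omega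
  -- constants
  have hcardS : (0:ℝ) < (Fintype.card S : ℝ) := by exact_mod_cast Fintype.card_pos
  have hcardA : (0:ℝ) < (Fintype.card A : ℝ) := by exact_mod_cast Fintype.card_pos
  have hKpos : (0:ℝ) < (K : ℝ) := by exact_mod_cast hK
  have hTpos : (2:ℝ) ≤ (T : ℝ) := by exact_mod_cast hT2
  set Cr : ℝ := (Fintype.card S : ℝ) * (Fintype.card A : ℝ) * (T : ℝ) * (K : ℝ) / δ
    with hCrdef
  have hcard1 : (1:ℝ) ≤ (Fintype.card S : ℝ) := by exact_mod_cast Fintype.card_pos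
  have hcard1A : (1:ℝ) ≤ (Fintype.card A : ℝ) := by exact_mod_cast Fintype.card_pos
  have hK1 : (1:ℝ) ≤ (K : ℝ) := by exact_mod_cast hK
  have hSATK2 : (2:ℝ) ≤ (Fintype.card S : ℝ) * (Fintype.card A : ℝ) * (T : ℝ) * (K : ℝ) := by
    have h1 : (1:ℝ) * 1 ≤ (Fintype.card S : ℝ) * (Fintype.card A : ℝ) :=
      mul_le_mul hcard1 hcard1A zero_le_one (by linarith)
    have h2 : (1:ℝ) * 1 * 2 ≤ (Fintype.card S : ℝ) * (Fintype.card A : ℝ) * (T : ℝ) :=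
      mul_le_mul h1 hTpos (by norm_num) (by nlinarith)
    have h3 : (1:ℝ) * 1 * 2 * 1 ≤ (Fintype.card S : ℝ) * (Fintype.card A : ℝ) * (T : ℝ) * (K : ℝ) :=
      mul_le_mul h2 hK1 (by norm_num) (by nlinarith)
    linarith
  have hCrpos : 0 < Cr := by
    rw [hCrdef]
    positivity
  have hCr2 : (2:ℝ) ≤ Cr := by
    rw [hCrdef, le_div_iff₀ hδ0]
    nlinarith
  set L : ℝ := Real.log (2 * Cr) with hLdef
  have hL0 : (0:ℝ) ≤ L := Real.log_nonneg (by linarith)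
  have hlogCr0 : (0:ℝ) ≤ Real.log Cr := Real.log_nonneg (by linarith)
  have hLle : L ≤ 2 * Real.log Cr := by
    rw [hLdef, Real.log_mul two_ne_zero (by linarith)]
    have h2 : Real.log 2 ≤ Real.log Cr := Real.log_le_log (by norm_num) hCr2
    linarith
  set Bc : ℝ := 1 / (1 - γ) with hBcdef
  have hBcpos : 0 < Bc := by rw [hBcdef]; positivity
  -- the optimal value function and its bounds
  set Vst : S → ℝ := fun s => vmax (fun a => Qstar (s, a)) with hVstdef
  have hbddS : ∀ (f : S → ℝ), BddAbove (Set.range f) :=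
    fun f => Set.Finite.bddAbove (Set.finite_range f)
  have hbddSb : ∀ (f : S → ℝ), BddBelow (Set.range f) :=
    fun f => Set.Finite.bddBelow (Set.finite_range f)
  have hVub : ∀ s, Vst s ≤ 1 + γ * (⨆ s', Vst s') := by
    intro s
    apply vmax_le
    intro a
    rw [hQstar (s, a)]
    have h1 : ∑ s', P (s, a) s' * vmax (fun a' => Qstar (s', a')) ≤ ⨆ s', Vst s' := by
      calc ∑ s', P (s, a) s' * vmax (fun a' => Qstar (s', a'))
          ≤ ∑ s', P (s, a) s' * (⨆ s', Vst s') := by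
            apply Finset.sum_le_sum
            intro s' _
            exact mul_le_mul_of_nonneg_left (le_ciSup (f := Vst) (hbddS _) s') (hP0 _ _)
        _ = ⨆ s', Vst s' := by rw [← Finset.sum_mul, hP1, one_mul]
    have h2 := (hr (s, a)).2
    nlinarith
  have hMub : (⨆ s', Vst s') ≤ Bc := by
    have h1 : (⨆ s', Vst s') ≤ 1 + γ * (⨆ s', Vst s') := ciSup_le hVub
    rw [hBcdef, le_div_iff₀ h1γ]
    nlinarith
  have hVst_le : ∀ s, Vst s ≤ Bc := fun s => le_trans (le_ciSup (hbddS _) s) hMub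
  have hVlb : ∀ s, γ * (⨅ s', Vst s') ≤ Vst s := by
    intro s
    obtain ⟨a0⟩ := (inferInstance : Nonempty A)
    have hstep : γ * (⨅ s', Vst s') ≤ Qstar (s, a0) := by
      rw [hQstar (s, a0)]
      have h1 : (⨅ s', Vst s') ≤ ∑ s', P (s, a0) s' * vmax (fun a' => Qstar (s', a')) := by
        calc (⨅ s', Vst s') = ∑ s', P (s, a0) s' * (⨅ s', Vst s') := by
              rw [← Finset.sum_mul, hP1, one_mul]
          _ ≤ ∑ s', P (s, a0) s' * vmax (fun a' => Qstar (s', a')) := by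
              apply Finset.sum_le_sum
              intro s' _
              exact mul_le_mul_of_nonneg_left (ciInf_le (f := Vst) (hbddSb _) s') (hP0 _ _)
      have h2 := (hr (s, a0)).1
      nlinarith
    exact hstep.trans (le_vmax (fun a => Qstar (s, a)) a0)
  have hm0 : (0:ℝ) ≤ ⨅ s', Vst s' := by
    have h1 : γ * (⨅ s', Vst s') ≤ ⨅ s', Vst s' := le_ciInf hVlb
    by_contra hcon
    push_neg at hcon
    nlinarith
  have hVst_nn : ∀ s, (0:ℝ) ≤ Vst s := fun s => le_trans hm0 (ciInf_le (hbddSb _) s)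
  -- the martingale increment function
  set Zf : S × A → S × A → ℝ := fun y b => (∑ s', P y s' * Vst s') - Vst b.1 with hZfdef
  have hZr : ∀ (y b : S × A), Zf y b ∈ Set.Icc ((∑ s', P y s' * Vst s') - Bc)
      ((∑ s', P y s' * Vst s') - Bc + Bc) := by
    intro y b
    constructor
    · simp only [hZfdef]
      have := hVst_le b.1
      linarith
    · simp only [hZfdef]
      have := hVst_nn b.1
      linarith
  -- kernel facts
  have hκ0k : ∀ (k : Fin K) (y b : S × A), 0 ≤ κ k y b := by
    intro k y b
    rw [hκ]
    exact mul_nonneg (hP0 _ _) (hπb0 _ _ _)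
  have hκsk : ∀ (k : Fin K) (y : S × A), ∑ b, κ k y b = 1 := by
    intro k y
    rw [Fintype.sum_prod_type]
    have h1 : ∀ s', ∑ a', κ k y (s', a') = P y s' := by
      intro s'
      have h2 : ∀ a', κ k y (s', a') = P y s' * πb k s' a' := fun a' => hκ k y (s', a')
      rw [Finset.sum_congr rfl (fun a' _ => h2 a'), ← Finset.mul_sum, hπb1, mul_one]
    rw [Finset.sum_congr rfl (fun s' _ => h1 s'), hP1]
  have hZmk : ∀ (k : Fin K) (y : S × A), ∑ b, κ k y b * Zf y b = 0 := by
    intro k y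
    rw [Fintype.sum_prod_type]
    have h1 : ∀ s', ∑ a', κ k y (s', a') * Zf y (s', a')
        = P y s' * ((∑ s'', P y s'' * Vst s'') - Vst s') := by
      intro s'
      have h2 : ∀ a', κ k y (s', a') * Zf y (s', a')
          = (P y s' * ((∑ s'', P y s'' * Vst s'') - Vst s')) * πb k s' a' := by
        intro a'
        rw [hκ]
        simp only [hZfdef]
        ring
      rw [Finset.sum_congr rfl (fun a' _ => h2 a'), ← Finset.mul_sum, hπb1, mul_one]
    rw [Finset.sum_congr rfl (fun s' _ => h1 s')]
    have h3 : ∑ s', P y s' * ((∑ s'', P y s'' * Vst s'') - Vst s')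
        = (∑ s', P y s') * (∑ s'', P y s'' * Vst s'') - ∑ s', P y s' * Vst s' := by
      rw [Finset.sum_mul]
      rw [← Finset.sum_sub_distrib]
      apply Finset.sum_congr rfl
      intro s' _
      ring
    rw [h3, hP1, one_mul, sub_self]
  -- the good event
  set GE : Set Ω := ⋂ (k : Fin K), ⋂ (q : Fin (T / τ)), ⋂ (sa : S × A), ⋂ (j : Fin τ),
      {ω | ¬ (Real.sqrt (2 * L * sig2 η (j : ℕ) * Bc ^ 2 / 4)
        < |∑ e ∈ Finset.range τ, wgtD η (j : ℕ) (τ * (q : ℕ)) sa e (fun i => traj k i ω)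
            * Zf (traj k (τ * (q : ℕ) + e) ω) (traj k (τ * (q : ℕ) + e + 1) ω)|)} with hGEdef
  -- probability of each bad component
  have hbad : ∀ (k : Fin K) (q : Fin (T / τ)) (sa : S × A) (j : Fin τ),
      Pr {ω | Real.sqrt (2 * L * sig2 η (j : ℕ) * Bc ^ 2 / 4)
        < |∑ e ∈ Finset.range τ, wgtD η (j : ℕ) (τ * (q : ℕ)) sa e (fun i => traj k i ω)
            * Zf (traj k (τ * (q : ℕ) + e) ω) (traj k (τ * (q : ℕ) + e + 1) ω)|}
      ≤ ENNReal.ofReal (2 * Real.exp (-L)) := by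
    intro k q sa j
    rcases Nat.eq_zero_or_pos (j : ℕ) with hj0 | hjpos
    · have hempty : {ω : Ω | Real.sqrt (2 * L * sig2 η (j : ℕ) * Bc ^ 2 / 4)
          < |∑ e ∈ Finset.range τ, wgtD η (j : ℕ) (τ * (q : ℕ)) sa e (fun i => traj k i ω)
              * Zf (traj k (τ * (q : ℕ) + e) ω) (traj k (τ * (q : ℕ) + e + 1) ω)|} = ∅ := by
        rw [Set.eq_empty_iff_forall_notMem]
        intro ω hmem
        simp only [Set.mem_setOf_eq] at hmem
        have hM : (∑ e ∈ Finset.range τ, wgtD η (j : ℕ) (τ * (q : ℕ)) sa e (fun i => traj k i ω)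
            * Zf (traj k (τ * (q : ℕ) + e) ω) (traj k (τ * (q : ℕ) + e + 1) ω)) = 0 := by
          apply Finset.sum_eq_zero
          intro e _
          rw [wgtD, if_neg, zero_mul]
          rintro ⟨_, hc⟩
          omega
        have hsig : sig2 η (j : ℕ) = 0 := by rw [hj0]; simp [sig2]
        rw [hM, hsig] at hmem
        simp at hmem
      rw [hempty]
      simp
    · have hσpos : 0 < sig2 η (j : ℕ) := by
        have h1 : ((1:ℝ) - η) ^ 2 ≥ 0 := sq_nonneg _
        have h2 : (((1:ℝ) - η) ^ 2) ^ (0:ℕ) ≤ ∑ i ∈ Finset.range (j : ℕ), ((1 - η) ^ 2) ^ i := by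
          apply Finset.single_le_sum (f := fun i => ((1 - η : ℝ) ^ 2) ^ i)
          · intro i _
            positivity
          · exact Finset.mem_range.mpr hjpos
        have h3 : (((1:ℝ) - η) ^ 2) ^ (0:ℕ) = 1 := pow_zero _
        rw [sig2]
        rw [h3] at h2
        linarith
    -- apply the Chernoff core
      exact chernoff_core Pr (traj k) (κ k) (fun s => (Pr {ω | traj k 0 ω = s}).toReal)
        (htraj_meas k) (hMarkov k) (fun s => rfl) (hκ0k k) (hκsk k)
        (τ * (q : ℕ)) τ (wgtD η (j : ℕ) (τ * (q : ℕ)) sa)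
        (fun e x x' h => wgtD_adapted η (j : ℕ) (τ * (q : ℕ)) sa e x x' h)
        (sig2 η (j : ℕ)) hσpos
        (fun x => wgtD_sq_sum_le η hη1.le (j : ℕ) (τ * (q : ℕ)) sa τ x)
        Zf Bc hBcpos (fun y => (∑ s', P y s' * Vst s') - Bc) hZr (hZmk k) L hL0
  -- measurability of each good component
  have hgoodmeas : ∀ (k : Fin K) (q : Fin (T / τ)) (sa : S × A) (j : Fin τ),
      MeasurableSet {ω : Ω | ¬ (Real.sqrt (2 * L * sig2 η (j : ℕ) * Bc ^ 2 / 4)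
        < |∑ e ∈ Finset.range τ, wgtD η (j : ℕ) (τ * (q : ℕ)) sa e (fun i => traj k i ω)
            * Zf (traj k (τ * (q : ℕ) + e) ω) (traj k (τ * (q : ℕ) + e + 1) ω)|)} := by
    intro k q sa j
    have hΦad : ∀ (x x' : ℕ → S × A), (∀ i ≤ τ * (q : ℕ) + τ, x i = x' i) →
        (∑ e ∈ Finset.range τ, wgtD η (j : ℕ) (τ * (q : ℕ)) sa e x * Zf (x (τ * (q : ℕ) + e)) (x (τ * (q : ℕ) + e + 1)))
        = ∑ e ∈ Finset.range τ, wgtD η (j : ℕ) (τ * (q : ℕ)) sa e x' * Zf (x' (τ * (q : ℕ) + e)) (x' (τ * (q : ℕ) + e + 1)) := by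
      intro x x' hxx
      apply Finset.sum_congr rfl
      intro e he
      rw [Finset.mem_range] at he
      rw [wgtD_adapted η (j : ℕ) (τ * (q : ℕ)) sa e x x' (fun i hi => hxx i (by omega)),
        hxx _ (by omega), hxx _ (by omega)]
    exact (prefix_event Pr (traj k) (κ k) (fun s => (Pr {ω | traj k 0 ω = s}).toReal)
      (htraj_meas k) (hMarkov k) (fun s => rfl) (hκ0k k)
      (fun s => ENNReal.toReal_nonneg)
      (τ * (q : ℕ) + τ)
      (fun x => ¬ (Real.sqrt (2 * L * sig2 η (j : ℕ) * Bc ^ 2 / 4)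
        < |∑ e ∈ Finset.range τ, wgtD η (j : ℕ) (τ * (q : ℕ)) sa e x
            * Zf (x (τ * (q : ℕ) + e)) (x (τ * (q : ℕ) + e + 1))|))
      (fun x x' h hx => by
        rw [← hΦad x x' h]
        exact hx)).1
  have hGEmeas : MeasurableSet GE := by
    rw [hGEdef]
    exact MeasurableSet.iInter fun k => MeasurableSet.iInter fun q =>
      MeasurableSet.iInter fun sa => MeasurableSet.iInter fun j => hgoodmeas k q sa j
  -- union bound
  have hGEc : Pr GEᶜ ≤ ENNReal.ofReal δ := by
    have hcup : GEᶜ = ⋃ (i : Fin K × Fin (T / τ) × (S × A) × Fin τ),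
        {ω | Real.sqrt (2 * L * sig2 η (i.2.2.2 : ℕ) * Bc ^ 2 / 4)
          < |∑ e ∈ Finset.range τ, wgtD η (i.2.2.2 : ℕ) (τ * (i.2.1 : ℕ)) i.2.2.1 e
              (fun i' => traj i.1 i' ω)
              * Zf (traj i.1 (τ * (i.2.1 : ℕ) + e) ω) (traj i.1 (τ * (i.2.1 : ℕ) + e + 1) ω)|} := by
      rw [hGEdef]
      ext ω
      simp only [Set.compl_iInter, Set.mem_iUnion, Set.mem_compl_iff, Set.mem_setOf_eq, not_not]
      constructor
      · rintro ⟨k, q, sa, j, h⟩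
        exact ⟨⟨k, q, sa, j⟩, h⟩
      · rintro ⟨⟨k, q, sa, j⟩, h⟩
        exact ⟨k, q, sa, j, h⟩
    rw [hcup]
    have hcard : (Fintype.card (Fin K × Fin (T / τ) × (S × A) × Fin τ) : ℝ)
        = (Fintype.card S : ℝ) * (Fintype.card A : ℝ) * (T : ℝ) * (K : ℝ) := by
      have h1 : Fintype.card (Fin K × Fin (T / τ) × (S × A) × Fin τ)
          = K * ((T / τ) * ((Fintype.card S * Fintype.card A) * τ)) := by
        simp [Fintype.card_prod, Fintype.card_fin]
      have h2 : (T / τ) * ((Fintype.card S * Fintype.card A) * τ)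
          = (Fintype.card S * Fintype.card A) * T := by
        rw [show (T / τ) * ((Fintype.card S * Fintype.card A) * τ)
            = (Fintype.card S * Fintype.card A) * ((T / τ) * τ) from by ring,
          Nat.div_mul_cancel hτT]
      rw [h1, h2]
      push_cast
      ring
    calc Pr (⋃ (i : Fin K × Fin (T / τ) × (S × A) × Fin τ), _)
        ≤ ∑' (i : Fin K × Fin (T / τ) × (S × A) × Fin τ), Pr _ := measure_iUnion_le _
      _ = ∑ i : Fin K × Fin (T / τ) × (S × A) × Fin τ, Pr _ := tsum_fintype _
      _ ≤ ∑ _i : Fin K × Fin (T / τ) × (S × A) × Fin τ,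
            ENNReal.ofReal (2 * Real.exp (-L)) :=
          Finset.sum_le_sum (fun i _ => hbad i.1 i.2.1 i.2.2.1 i.2.2.2)
      _ = (Fintype.card (Fin K × Fin (T / τ) × (S × A) × Fin τ) : ℝ≥0∞)
            * ENNReal.ofReal (2 * Real.exp (-L)) := by
          rw [Finset.sum_const, Finset.card_univ, nsmul_eq_mul]
      _ = ENNReal.ofReal δ := by
          rw [show ((Fintype.card (Fin K × Fin (T / τ) × (S × A) × Fin τ) : ℕ) : ℝ≥0∞)
              = ENNReal.ofReal ((Fintype.card (Fin K × Fin (T / τ) × (S × A) × Fin τ) : ℕ) : ℝ)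
            from (ENNReal.ofReal_natCast _).symm]
          rw [← ENNReal.ofReal_mul (by positivity)]
          congr 1
          rw [hcard]
          rw [hLdef, Real.exp_neg, Real.exp_log (by linarith)]
          rw [hCrdef]
          field_simp
  -- probability of the good event
  have hPrGE : ENNReal.ofReal (1 - δ) ≤ Pr GE := by
    have hc : Pr GEᶜ = 1 - Pr GE := prob_compl_eq_one_sub hGEmeas
    have h2 : 1 - Pr GE ≤ ENNReal.ofReal δ := hc ▸ hGEc
    have h3 : (1:ℝ≥0∞) ≤ ENNReal.ofReal δ + Pr GE := tsub_le_iff_right.mp h2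
    have h4 : ENNReal.ofReal (1 - δ) = 1 - ENNReal.ofReal δ := by
      rw [ENNReal.ofReal_sub _ hδ0.le, ENNReal.ofReal_one]
    rw [h4]
    exact tsub_le_iff_left.mpr h3
  refine le_trans hPrGE (measure_mono ?_)
  -- the deterministic part: on the good event the statement holds
  intro ω hω
  simp only [Set.mem_setOf_eq]
  intro k u hu
  -- numbers
  have hι0le : τ * (u / τ) ≤ u := Nat.mul_div_le u τ
  have hmodlt : u - τ * (u / τ) < τ := by
    have h1 := Nat.mod_add_div u τ
    have h2 := Nat.mod_lt u hτ
    omega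
  have hqlt : u / τ < T / τ := by
    by_contra hcon
    push_neg at hcon
    have h2 : T ≤ τ * (u / τ) := by
      calc T = τ * (T / τ) := (Nat.mul_div_cancel' hτT).symm
        _ ≤ τ * (u / τ) := Nat.mul_le_mul_left τ hcon
    omega
  -- the good-event facts
  have hωGE : ∀ (k' : Fin K) (q : Fin (T / τ)) (sa : S × A) (j : Fin τ),
      |∑ e ∈ Finset.range τ, wgtD η (j : ℕ) (τ * (q : ℕ)) sa e (fun i => traj k' i ω)
          * Zf (traj k' (τ * (q : ℕ) + e) ω) (traj k' (τ * (q : ℕ) + e + 1) ω)|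
        ≤ Real.sqrt (2 * L * sig2 η (j : ℕ) * Bc ^ 2 / 4) := by
    intro k' q sa j
    have hmem := hω
    rw [hGEdef] at hmem
    simp only [Set.mem_iInter, Set.mem_setOf_eq] at hmem
    exact not_lt.mp (hmem k' q sa j)
  set Z2 : ℕ → ℝ := fun e => Zf (traj k (τ * (u / τ) + e) ω) (traj k (τ * (u / τ) + e + 1) ω)
    with hZ2def
  have hGfact : ∀ (sa : S × A) (j : ℕ), j < τ →
      |∑ e ∈ Finset.range τ, wgtD η j (τ * (u / τ)) sa e (fun i => traj k i ω) * Z2 e|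
        ≤ Real.sqrt (2 * L * sig2 η j * Bc ^ 2 / 4) := by
    intro sa j hj
    exact hωGE k ⟨u / τ, hqlt⟩ sa ⟨j, hj⟩
  set Aa : ℝ := supNorm (fun sa : S × A => Qstar sa - Q (τ * (u / τ)) k sa ω) with hAadef
  set Eb : ℝ := 2 * γ / (1 - γ) * Real.sqrt (η * Real.log Cr) with hEbdef
  have hAa0 : 0 ≤ Aa := by rw [hAadef]; exact supNorm_nonneg _
  have hEb0 : 0 ≤ Eb := by
    rw [hEbdef]
    exact mul_nonneg (div_nonneg (by linarith) h1γ.le) (Real.sqrt_nonneg _)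
  -- companion estimate: H(d) implies the sup-norm bound at time d
  have hnorm : ∀ d, d ≤ u - τ * (u / τ) →
      (∀ sa : S × A, |Qstar sa - Q (τ * (u / τ) + d) k sa ω
          - γ * η * (∑ e ∈ Finset.range τ,
              wgtD η (cntD (fun i => traj k i ω) (τ * (u / τ)) sa d) (τ * (u / τ)) sa e
                (fun i => traj k i ω) * Z2 e)|
        ≤ (1 - η) ^ (cntD (fun i => traj k i ω) (τ * (u / τ)) sa d) * Aa
          + (1 - (1 - η) ^ (cntD (fun i => traj k i ω) (τ * (u / τ)) sa d))
            * (γ * (Aa + Eb))) →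
      ∀ sa : S × A, |Qstar sa - Q (τ * (u / τ) + d) k sa ω| ≤ Aa + Eb := by
    intro d hd hP sa
    set N := cntD (fun i => traj k i ω) (τ * (u / τ)) sa d with hNdef
    have hNd : N ≤ d := cntD_le _ _ _ _
    have hNτ : N < τ := by omega
    have hG := hGfact sa N hNτ
    have h1 := hP sa
    set Msum : ℝ := ∑ e ∈ Finset.range τ,
        wgtD η N (τ * (u / τ)) sa e (fun i => traj k i ω) * Z2 e with hMsumdef
    -- triangle inequality
    have h3 : |Qstar sa - Q (τ * (u / τ) + d) k sa ω|
        ≤ |Qstar sa - Q (τ * (u / τ) + d) k sa ω - γ * η * Msum| + |γ * η * Msum| := by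
      have h4 := abs_add_le (Qstar sa - Q (τ * (u / τ) + d) k sa ω - γ * η * Msum)
        (γ * η * Msum)
      simpa using h4
    have h5 : |γ * η * Msum| ≤ γ * η * Real.sqrt (2 * L * sig2 η N * Bc ^ 2 / 4) := by
      rw [abs_mul, abs_of_nonneg (mul_nonneg hγ0 hη0.le)]
      exact mul_le_mul_of_nonneg_left hG (mul_nonneg hγ0 hη0.le)
    -- numeric facts
    have hpow0 : (0:ℝ) ≤ (1 - η) ^ N := pow_nonneg (by linarith) N
    have hpow1 : (1 - η) ^ N ≤ 1 := pow_le_one₀ (by linarith) (by linarith)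
    have hbern : 1 - (N : ℝ) * η ≤ (1 - η) ^ N := by
      have hb := one_add_mul_le_pow (a := -η) (by linarith) N
      have : (1 : ℝ) + (N : ℝ) * (-η) = 1 - (N : ℝ) * η := by ring
      rw [this] at hb
      exact hb
    have hNreal : (N : ℝ) ≤ (τ : ℝ) - 1 := by
      have h6 : (N : ℝ) + 1 ≤ (τ : ℝ) := by exact_mod_cast hNτ
      linarith
    have hτη : (τ : ℝ) * η ≤ 1 / 2 := by linarith [hητ]
    have hc12 : (1 - (1 - η) ^ N) * γ ≤ 1 / 2 := by
      have h5' : 1 - (1 - η) ^ N ≤ (N : ℝ) * η := by linarith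
      have h6 : (N : ℝ) * η ≤ ((τ : ℝ) - 1) * η := mul_le_mul_of_nonneg_right hNreal hη0.le
      have h7 : ((τ : ℝ) - 1) * η ≤ 1 / 2 := by
        have hexp : ((τ : ℝ) - 1) * η = (τ : ℝ) * η - η := by ring
        rw [hexp]
        linarith [hη0.le]
      calc (1 - (1 - η) ^ N) * γ ≤ (1 - (1 - η) ^ N) * 1 :=
            mul_le_mul_of_nonneg_left hγ1.le (by linarith)
        _ = 1 - (1 - η) ^ N := mul_one _
        _ ≤ 1 / 2 := by linarith
    -- noise bound
    have hσ0 : 0 ≤ sig2 η N := Finset.sum_nonneg fun i _ => by positivity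
    have hnoise : γ * η * Real.sqrt (2 * L * sig2 η N * Bc ^ 2 / 4) ≤ Eb / 2 := by
      have hgeo : sig2 η N * (1 - (1 - η) ^ 2) ≤ 1 := by
        have hgm := geom_sum_mul (x := ((1 : ℝ) - η) ^ 2) N
        have h8 : sig2 η N * (((1 - η) ^ 2) - 1) = ((1 - η) ^ 2) ^ N - 1 := by
          rw [sig2]
          exact hgm
        have h9 : (0:ℝ) ≤ ((1 - η) ^ 2) ^ N := by positivity
        linarith
      have hησ1 : η * sig2 η N ≤ 1 := by
        have hid : sig2 η N * (1 - (1 - η) ^ 2) = η * sig2 η N * (2 - η) := by ring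
        rw [hid] at hgeo
        have h16 : η * sig2 η N ≤ η * sig2 η N * (2 - η) := by
          have h17 : (0:ℝ) ≤ (η * sig2 η N) * (1 - η) :=
            mul_nonneg (mul_nonneg hη0.le hσ0) (by linarith)
          linarith [h17]
        linarith
      have hη2σ : η ^ 2 * sig2 η N ≤ η := by
        have h18 := mul_le_mul_of_nonneg_left hησ1 hη0.le
        linarith [h18]
      have hstep1 : η * Real.sqrt (2 * L * sig2 η N * Bc ^ 2 / 4)
          = Real.sqrt (η ^ 2 * (2 * L * sig2 η N * Bc ^ 2 / 4)) := by
        rw [Real.sqrt_mul (sq_nonneg η), Real.sqrt_sq hη0.le]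
      have hstep2 : Real.sqrt (η ^ 2 * (2 * L * sig2 η N * Bc ^ 2 / 4))
          ≤ Real.sqrt (Bc ^ 2 * (η * Real.log Cr)) := by
        apply Real.sqrt_le_sqrt
        have h10 : η ^ 2 * (2 * L * sig2 η N * Bc ^ 2 / 4)
            = (η ^ 2 * sig2 η N) * L * Bc ^ 2 / 2 := by ring
        rw [h10]
        have h11 : (η ^ 2 * sig2 η N) * L ≤ η * L :=
          mul_le_mul_of_nonneg_right hη2σ hL0
        have h12 : η * L ≤ η * (2 * Real.log Cr) :=
          mul_le_mul_of_nonneg_left hLle hη0.le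
        have h13 := mul_le_mul_of_nonneg_right h11 (by positivity : (0:ℝ) ≤ Bc ^ 2 / 2)
        have h14 := mul_le_mul_of_nonneg_right h12 (by positivity : (0:ℝ) ≤ Bc ^ 2 / 2)
        linarith [h13, h14]
      have hstep3 : Real.sqrt (Bc ^ 2 * (η * Real.log Cr))
          = Bc * Real.sqrt (η * Real.log Cr) := by
        rw [Real.sqrt_mul (sq_nonneg Bc), Real.sqrt_sq hBcpos.le]
      have hEbhalf : Eb / 2 = γ * (Bc * Real.sqrt (η * Real.log Cr)) := by
        rw [hEbdef, hBcdef]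
        ring
      rw [hEbhalf]
      calc γ * η * Real.sqrt (2 * L * sig2 η N * Bc ^ 2 / 4)
          = γ * (η * Real.sqrt (2 * L * sig2 η N * Bc ^ 2 / 4)) := by ring
        _ ≤ γ * (Bc * Real.sqrt (η * Real.log Cr)) := by
            apply mul_le_mul_of_nonneg_left _ hγ0
            rw [hstep1]
            exact hstep2.trans (le_of_eq hstep3)
    -- combine
    have hfinal : (1 - η) ^ N * Aa + (1 - (1 - η) ^ N) * (γ * (Aa + Eb))
        + γ * η * Real.sqrt (2 * L * sig2 η N * Bc ^ 2 / 4) ≤ Aa + Eb := by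
      have e1 : (1 - η) ^ N * Aa + (1 - (1 - η) ^ N) * (γ * (Aa + Eb))
          ≤ Aa + (1 - (1 - η) ^ N) * γ * Eb := by
        have key : (0:ℝ) ≤ (1 - (1 - η) ^ N) * (1 - γ) * Aa :=
          mul_nonneg (mul_nonneg (by linarith) (by linarith)) hAa0
        linarith [key]
      have e2 : (1 - (1 - η) ^ N) * γ * Eb ≤ (1 / 2) * Eb :=
        mul_le_mul_of_nonneg_right hc12 hEb0
      linarith
    linarith [h3, h5, h1]
  -- the main induction
  have hind : ∀ d, d ≤ u - τ * (u / τ) →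
      ∀ sa : S × A, |Qstar sa - Q (τ * (u / τ) + d) k sa ω
          - γ * η * (∑ e ∈ Finset.range τ,
              wgtD η (cntD (fun i => traj k i ω) (τ * (u / τ)) sa d) (τ * (u / τ)) sa e
                (fun i => traj k i ω) * Z2 e)|
        ≤ (1 - η) ^ (cntD (fun i => traj k i ω) (τ * (u / τ)) sa d) * Aa
          + (1 - (1 - η) ^ (cntD (fun i => traj k i ω) (τ * (u / τ)) sa d))
            * (γ * (Aa + Eb)) := by
    intro d
    induction d with
    | zero =>
        intro _ sa
        have hc0 : cntD (fun i => traj k i ω) (τ * (u / τ)) sa 0 = 0 := by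
          simp [cntD]
        rw [hc0]
        have hzero : (∑ e ∈ Finset.range τ,
            wgtD η 0 (τ * (u / τ)) sa e (fun i => traj k i ω) * Z2 e) = 0 := by
          apply Finset.sum_eq_zero
          intro e _
          rw [wgtD, if_neg, zero_mul]
          rintro ⟨-, h2⟩
          omega
        rw [hzero]
        simp only [pow_zero, one_mul, sub_self, zero_mul, add_zero, mul_zero, sub_zero,
          Nat.add_zero]
        rw [hAadef]
        exact abs_le_supNorm (fun sa : S × A => Qstar sa - Q (τ * (u / τ)) k sa ω) sa
    | succ d ih =>
        intro hd1 sa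
        rw [show τ * (u / τ) + (d + 1) = τ * (u / τ) + d + 1 from by omega]
        have hd : d ≤ u - τ * (u / τ) := by omega
        have hP1 := ih hd
        have hnormd := hnorm d hd hP1
        have hτnd : ¬ τ ∣ (τ * (u / τ) + d + 1) := by
          intro hdvd
          have h3 : τ * (u / τ) + d + 1 = τ * (u / τ) + (d + 1) := by omega
          rw [h3] at hdvd
          have h2 : τ ∣ (d + 1) := (Nat.dvd_add_right ⟨u / τ, rfl⟩).mp hdvd
          have h4 := Nat.le_of_dvd (by omega) h2
          omega
        have hQrec : Q (τ * (u / τ) + d + 1) k sa ω = Qhalf (τ * (u / τ) + d + 1) k sa ω := by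
          rw [havg (τ * (u / τ) + d) k sa ω, if_neg hτnd]
        by_cases hv : sa = traj k (τ * (u / τ) + d) ω
        · -- visit case
          have hv' : traj k (τ * (u / τ) + d) ω = sa := hv.symm
          have hQs : Qhalf (τ * (u / τ) + d + 1) k sa ω
              = (1 - η) * Q (τ * (u / τ) + d) k sa ω
                + η * (r sa + γ * vmax (fun a' =>
                    Q (τ * (u / τ) + d) k ((traj k (τ * (u / τ) + d + 1) ω).1, a') ω)) := by
            rw [hupd (τ * (u / τ) + d) k sa ω, if_pos hv]
          have hcs : cntD (fun i => traj k i ω) (τ * (u / τ)) sa (d + 1)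
              = cntD (fun i => traj k i ω) (τ * (u / τ)) sa d + 1 := by
            rw [cntD_succ, if_pos hv']
          have hgs := gval_succ η Z2 (τ * (u / τ)) sa τ (fun i => traj k i ω) d
            (by omega) hv'
          set N := cntD (fun i => traj k i ω) (τ * (u / τ)) sa d with hNdef
          have hZ2d : Z2 d = (∑ s', P sa s' * Vst s')
              - Vst ((traj k (τ * (u / τ) + d + 1) ω).1) := by
            rw [hZ2def]
            simp only [hZfdef]
            rw [hv']
          have hsplit : Qstar sa - Q (τ * (u / τ) + d + 1) k sa ω
              - γ * η * (∑ e ∈ Finset.range τ,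
                  wgtD η (N + 1) (τ * (u / τ)) sa e (fun i => traj k i ω) * Z2 e)
            = (1 - η) * (Qstar sa - Q (τ * (u / τ) + d) k sa ω
                - γ * η * (∑ e ∈ Finset.range τ,
                    wgtD η N (τ * (u / τ)) sa e (fun i => traj k i ω) * Z2 e))
              + η * γ * (Vst ((traj k (τ * (u / τ) + d + 1) ω).1)
                  - vmax (fun a' =>
                      Q (τ * (u / τ) + d) k ((traj k (τ * (u / τ) + d + 1) ω).1, a') ω)) := by
            rw [hQrec, hQs, hgs, hZ2d, hQstar sa]
            ring
          rw [hcs, hsplit]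
          have hvmaxdiff : |Vst ((traj k (τ * (u / τ) + d + 1) ω).1)
              - vmax (fun a' =>
                  Q (τ * (u / τ) + d) k ((traj k (τ * (u / τ) + d + 1) ω).1, a') ω)|
              ≤ Aa + Eb :=
            abs_vmax_sub_vmax_le
              (fun a => Qstar ((traj k (τ * (u / τ) + d + 1) ω).1, a))
              (fun a => Q (τ * (u / τ) + d) k ((traj k (τ * (u / τ) + d + 1) ω).1, a) ω)
              (fun a => hnormd ((traj k (τ * (u / τ) + d + 1) ω).1, a))
          calc |(1 - η) * (Qstar sa - Q (τ * (u / τ) + d) k sa ω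
                - γ * η * (∑ e ∈ Finset.range τ,
                    wgtD η N (τ * (u / τ)) sa e (fun i => traj k i ω) * Z2 e))
              + η * γ * (Vst ((traj k (τ * (u / τ) + d + 1) ω).1)
                  - vmax (fun a' =>
                      Q (τ * (u / τ) + d) k ((traj k (τ * (u / τ) + d + 1) ω).1, a') ω))|
              ≤ |(1 - η) * (Qstar sa - Q (τ * (u / τ) + d) k sa ω
                  - γ * η * (∑ e ∈ Finset.range τ,
                      wgtD η N (τ * (u / τ)) sa e (fun i => traj k i ω) * Z2 e))|
                + |η * γ * (Vst ((traj k (τ * (u / τ) + d + 1) ω).1)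
                    - vmax (fun a' =>
                        Q (τ * (u / τ) + d) k ((traj k (τ * (u / τ) + d + 1) ω).1, a') ω))| :=
              abs_add_le _ _
            _ = (1 - η) * |Qstar sa - Q (τ * (u / τ) + d) k sa ω
                  - γ * η * (∑ e ∈ Finset.range τ,
                      wgtD η N (τ * (u / τ)) sa e (fun i => traj k i ω) * Z2 e)|
                + η * γ * |Vst ((traj k (τ * (u / τ) + d + 1) ω).1)
                    - vmax (fun a' =>
                        Q (τ * (u / τ) + d) k ((traj k (τ * (u / τ) + d + 1) ω).1, a') ω)| := by
              rw [abs_mul, abs_mul, abs_of_nonneg (by linarith : (0:ℝ) ≤ 1 - η),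
                abs_of_nonneg (mul_nonneg hη0.le hγ0)]
            _ ≤ (1 - η) * ((1 - η) ^ N * Aa + (1 - (1 - η) ^ N) * (γ * (Aa + Eb)))
                + η * γ * (Aa + Eb) :=
              add_le_add
                (mul_le_mul_of_nonneg_left (hP1 sa) (by linarith))
                (mul_le_mul_of_nonneg_left hvmaxdiff (mul_nonneg hη0.le hγ0))
            _ = (1 - η) ^ (N + 1) * Aa + (1 - (1 - η) ^ (N + 1)) * (γ * (Aa + Eb)) := by
              rw [pow_succ]
              ring
        · -- no-visit case
          have hQs : Qhalf (τ * (u / τ) + d + 1) k sa ω = Q (τ * (u / τ) + d) k sa ω := by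
            rw [hupd (τ * (u / τ) + d) k sa ω, if_neg hv]
          have hcs : cntD (fun i => traj k i ω) (τ * (u / τ)) sa (d + 1)
              = cntD (fun i => traj k i ω) (τ * (u / τ)) sa d := by
            rw [cntD_succ, if_neg (fun h => hv h.symm), add_zero]
          rw [hQrec, hQs, hcs]
          exact hP1 sa
  -- conclude
  have hfinal := hnorm (u - τ * (u / τ)) le_rfl (hind _ le_rfl)
  rw [show τ * (u / τ) + (u - τ * (u / τ)) = u from by omega] at hfinal
  apply supNorm_le
  intro sa
  exact hfinal sa
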